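/- arXiv:2507.15005 — 9 statements merged into one kernel-verified Lean document; each statement's English description precedes it below -/
import Mathlib

section
/- For every n ≥ 2 there exists a group homomorphism η₁ : T_n → Aut(F_n) such that for each 1 ≤ i ≤ n−1, η₁(s_i) is the automorphism of F_n sending x_i ↦ x_i x_{i+1} x_i^{-1}, x_{i+1} ↦ x_i x_{i+1}^{-1} x_i x_{i+1} x_i^{-1}, and x_k ↦ x_k for k ∉ {i, i+1}. -/
noncomputable section
open Matrix

/-- The defining relations of the twin group `Tₙ` on generators `s_0, …, s_{n-2}` (0-indexed):
`sᵢ² = 1` and `sᵢsⱼ = sⱼsᵢ` for `|i - j| ≥ 2`. -/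
def twinRels (n : ℕ) : Set (FreeGroup (Fin (n - 1))) :=
  {r | (∃ i : Fin (n - 1), r = FreeGroup.of i * FreeGroup.of i) ∨
       (∃ i j : Fin (n - 1), (i.val + 2 ≤ j.val ∨ j.val + 2 ≤ i.val) ∧
          r = FreeGroup.of i * FreeGroup.of j * (FreeGroup.of i)⁻¹ * (FreeGroup.of j)⁻¹)}

namespace TwinAux

variable {n : ℕ}

def ga (i : Fin (n - 1)) : Fin n := ⟨i.val, by have := i.isLt; omega⟩
def gb (i : Fin (n - 1)) : Fin n := ⟨i.val + 1, by have := i.isLt; omega⟩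

def fmap (i : Fin (n - 1)) (k : Fin n) : FreeGroup (Fin n) :=
  if k = ga i then FreeGroup.of (ga i) * FreeGroup.of (gb i) * (FreeGroup.of (ga i))⁻¹
  else if k = gb i then
    FreeGroup.of (ga i) * (FreeGroup.of (gb i))⁻¹ * FreeGroup.of (ga i) *
      FreeGroup.of (gb i) * (FreeGroup.of (ga i))⁻¹
  else FreeGroup.of k

def phi (i : Fin (n - 1)) : FreeGroup (Fin n) →* FreeGroup (Fin n) :=
  FreeGroup.lift (fmap i)

lemma ga_ne_gb (i : Fin (n - 1)) : ga i ≠ gb i := by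
  simp [ga, gb, Fin.ext_iff]

lemma phi_a (i : Fin (n - 1)) :
    phi i (FreeGroup.of (ga i)) =
      FreeGroup.of (ga i) * FreeGroup.of (gb i) * (FreeGroup.of (ga i))⁻¹ := by
  simp [phi, fmap]

lemma phi_b (i : Fin (n - 1)) :
    phi i (FreeGroup.of (gb i)) =
      FreeGroup.of (ga i) * (FreeGroup.of (gb i))⁻¹ * FreeGroup.of (ga i) *
        FreeGroup.of (gb i) * (FreeGroup.of (ga i))⁻¹ := by
  simp [phi, fmap, (ga_ne_gb i).symm]

lemma phi_other (i : Fin (n - 1)) (k : Fin n) (h1 : k ≠ ga i) (h2 : k ≠ gb i) :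
    phi i (FreeGroup.of k) = FreeGroup.of k := by
  simp [phi, fmap, h1, h2]

lemma phi_phi (i : Fin (n - 1)) (x : FreeGroup (Fin n)) : phi i (phi i x) = x := by
  have : (phi i).comp (phi i) = MonoidHom.id (FreeGroup (Fin n)) := by
    apply FreeGroup.ext_hom
    intro k
    by_cases h1 : k = ga i
    · subst h1
      simp only [MonoidHom.comp_apply, MonoidHom.id_apply, phi_a, _root_.map_mul,
        _root_.map_inv, phi_b]
      group
    · by_cases h2 : k = gb i
      · subst h2
        simp only [MonoidHom.comp_apply, MonoidHom.id_apply, phi_b, _root_.map_mul,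
          _root_.map_inv, phi_a]
        group
      · simp [phi_other i k h1 h2]
  calc phi i (phi i x) = ((phi i).comp (phi i)) x := rfl
    _ = x := by rw [this]; rfl

lemma phi_comm (i j : Fin (n - 1)) (h : i.val + 2 ≤ j.val ∨ j.val + 2 ≤ i.val)
    (x : FreeGroup (Fin n)) : phi i (phi j x) = phi j (phi i x) := by
  have hia : phi i (FreeGroup.of (ga j)) = FreeGroup.of (ga j) :=
    phi_other i _ (by simp [ga, gb, Fin.ext_iff]; omega) (by simp [ga, gb, Fin.ext_iff]; omega)
  have hib : phi i (FreeGroup.of (gb j)) = FreeGroup.of (gb j) :=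
    phi_other i _ (by simp [ga, gb, Fin.ext_iff]; omega) (by simp [ga, gb, Fin.ext_iff]; omega)
  have hja : phi j (FreeGroup.of (ga i)) = FreeGroup.of (ga i) :=
    phi_other j _ (by simp [ga, gb, Fin.ext_iff]; omega) (by simp [ga, gb, Fin.ext_iff]; omega)
  have hjb : phi j (FreeGroup.of (gb i)) = FreeGroup.of (gb i) :=
    phi_other j _ (by simp [ga, gb, Fin.ext_iff]; omega) (by simp [ga, gb, Fin.ext_iff]; omega)
  have key : (phi i).comp (phi j) = (phi j).comp (phi i) := by
    apply FreeGroup.ext_hom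
    intro k
    simp only [MonoidHom.comp_apply]
    by_cases h1 : k = ga j
    · subst h1
      simp only [phi_a, _root_.map_mul, _root_.map_inv, hia, hib]
    · by_cases h2 : k = gb j
      · subst h2
        simp only [phi_b, _root_.map_mul, _root_.map_inv, hia, hib]
      · by_cases h3 : k = ga i
        · subst h3
          simp only [phi_other j _ h1 h2, phi_a, _root_.map_mul, _root_.map_inv, hja, hjb]
        · by_cases h4 : k = gb i
          · subst h4
            simp only [phi_other j _ h1 h2, phi_b, _root_.map_mul, _root_.map_inv, hja, hjb]
          · simp only [phi_other j _ h1 h2, phi_other i _ h3 h4]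
  calc phi i (phi j x) = ((phi i).comp (phi j)) x := rfl
    _ = ((phi j).comp (phi i)) x := by rw [key]
    _ = phi j (phi i x) := rfl

/-- The automorphism of `Fₙ` associated to the generator `sᵢ`. -/
def A (i : Fin (n - 1)) : MulAut (FreeGroup (Fin n)) where
  toFun := phi i
  invFun := phi i
  left_inv := phi_phi i
  right_inv := phi_phi i
  map_mul' := map_mul (phi i)

lemma A_apply (i : Fin (n - 1)) (x : FreeGroup (Fin n)) : A i x = phi i x := rfl

lemma rels_hold : ∀ r ∈ twinRels n, FreeGroup.lift (A (n := n)) r = 1 := by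
  rintro r (⟨i, rfl⟩ | ⟨i, j, hij, rfl⟩)
  · have hAA : A (n := n) i * A i = 1 := by
      ext x
      show phi i (phi i x) = x
      exact phi_phi i x
    simp only [_root_.map_mul, FreeGroup.lift_apply_of]
    exact hAA
  · have hc : A (n := n) i * A j = A j * A i := by
      ext x
      show phi i (phi j x) = phi j (phi i x)
      exact phi_comm i j hij x
    simp only [_root_.map_mul, _root_.map_inv, FreeGroup.lift_apply_of]
    rw [hc]
    group

end TwinAux

open TwinAux in
/-- For every `n ≥ 2` there is a group homomorphism `η₁ : Tₙ → Aut(Fₙ)`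
sending each generator `sᵢ` (0-indexed `i : Fin (n-1)`, corresponding to the 1-indexed
generator `s_{i+1}`) to the automorphism `x_i ↦ x_i x_{i+1} x_i⁻¹`,
`x_{i+1} ↦ x_i x_{i+1}⁻¹ x_i x_{i+1} x_i⁻¹`, `x_k ↦ x_k` otherwise
(0-indexed: the free generators moved are those with indices `i.val` and `i.val + 1`). -/
theorem statement1 (n : ℕ) (hn : 2 ≤ n) :
    ∃ η : PresentedGroup (twinRels n) →* MulAut (FreeGroup (Fin n)),
      ∀ i : Fin (n - 1),
        (η (PresentedGroup.of i) (FreeGroup.of ⟨i.val, by have := i.isLt; omega⟩) =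
          FreeGroup.of ⟨i.val, by have := i.isLt; omega⟩ *
            FreeGroup.of ⟨i.val + 1, by have := i.isLt; omega⟩ *
            (FreeGroup.of ⟨i.val, by have := i.isLt; omega⟩)⁻¹) ∧
        (η (PresentedGroup.of i) (FreeGroup.of ⟨i.val + 1, by have := i.isLt; omega⟩) =
          FreeGroup.of ⟨i.val, by have := i.isLt; omega⟩ *
            (FreeGroup.of ⟨i.val + 1, by have := i.isLt; omega⟩)⁻¹ *
            FreeGroup.of ⟨i.val, by have := i.isLt; omega⟩ *
            FreeGroup.of ⟨i.val + 1, by have := i.isLt; omega⟩ *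
            (FreeGroup.of ⟨i.val, by have := i.isLt; omega⟩)⁻¹) ∧
        (∀ k : Fin n, k.val ≠ i.val → k.val ≠ i.val + 1 →
          η (PresentedGroup.of i) (FreeGroup.of k) = FreeGroup.of k) := by
  refine ⟨PresentedGroup.toGroup rels_hold, fun i => ?_⟩
  have h : ∀ i : Fin (n - 1),
      PresentedGroup.toGroup (rels_hold (n := n)) (PresentedGroup.of i) = A i :=
    fun i => PresentedGroup.toGroup.of rels_hold
  refine ⟨?_, ?_, ?_⟩
  · rw [h]; exact phi_a i
  · rw [h]; exact phi_b i
  · intro k hk1 hk2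
    rw [h]
    exact phi_other i k (by simp [ga, Fin.ext_iff, hk1]) (by simp [gb, Fin.ext_iff, hk2])
end
end

section
/- For every n ≥ 2 there exists a group homomorphism η₁ : T_n → GL_n(ℤ[t^{±1}]) such that for each 1 ≤ i ≤ n−1, η₁(s_i) = S_i, where S_i is the n×n matrix that agrees with the identity matrix except in rows and columns i, i+1, where it has the 2×2 block [[1−t, t],[2−t, t−1]]. (Each S_i has determinant −1, hence is invertible over ℤ[t^{±1}].) -/
noncomputable section
open Matrix

/-- The `n × n` matrix over `ℤ[t^{±1}]` agreeing with the identity except in rows and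
columns `i, i+1` (0-indexed), where it has the `2 × 2` block `[[1-t, t], [2-t, t-1]]`. -/
def Smat (n i : ℕ) : Matrix (Fin n) (Fin n) (LaurentPolynomial ℤ) :=
  Matrix.of fun j k =>
    if j.val = i ∧ k.val = i then 1 - LaurentPolynomial.T 1
    else if j.val = i ∧ k.val = i + 1 then LaurentPolynomial.T 1
    else if j.val = i + 1 ∧ k.val = i then 2 - LaurentPolynomial.T 1
    else if j.val = i + 1 ∧ k.val = i + 1 then LaurentPolynomial.T 1 - 1
    else if j = k then 1 else 0

namespace TwinAux

open LaurentPolynomial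

abbrev R := LaurentPolynomial ℤ

def uvec (n i : ℕ) : Fin n → R := fun k =>
  if k.val = i then T 1 else if k.val = i + 1 then T 1 - 2 else 0

def wvec (n i : ℕ) : Fin n → R := fun k =>
  if k.val = i then -1 else if k.val = i + 1 then 1 else 0

lemma sum_val_eq {n i : ℕ} (h : i < n) (f : Fin n → R) :
    (∑ k : Fin n, if k.val = i then f k else 0) = f ⟨i, h⟩ := by
  rw [Finset.sum_eq_single_of_mem ⟨i, h⟩ (Finset.mem_univ _)]
  · simp
  · intro b _ hb
    rw [if_neg]
    simpa [Fin.ext_iff] using hb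

lemma dot_split {n i : ℕ} (h : i + 1 < n) (u : Fin n → R) :
    wvec n i ⬝ᵥ u = -u ⟨i, by omega⟩ + u ⟨i+1, h⟩ := by
  unfold dotProduct wvec
  have key : ∀ k : Fin n, (if k.val = i then (-1:R) else if k.val = i+1 then 1 else 0) * u k
      = (if k.val = i then -u k else 0) + (if k.val = i+1 then u k else 0) := by
    intro k; split_ifs <;> first | omega | ring
  simp only [key, Finset.sum_add_distrib, sum_val_eq (show i < n by omega),
    sum_val_eq h]

lemma dot_self {n i : ℕ} (h : i + 1 < n) : wvec n i ⬝ᵥ uvec n i = -2 := by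
  rw [dot_split h]
  simp only [uvec, Fin.val_mk, if_pos rfl, if_neg (Nat.succ_ne_self i).symm,
    if_neg (Nat.succ_ne_self i), if_true]
  ring

lemma dot_far {n i j : ℕ} (hij : i + 2 ≤ j ∨ j + 2 ≤ i) :
    wvec n i ⬝ᵥ uvec n j = 0 := by
  unfold dotProduct wvec uvec
  apply Finset.sum_eq_zero
  intro k _
  split_ifs <;> first | omega | ring

lemma vmv_mul {n : ℕ} (u w u' w' : Fin n → R) :
    vecMulVec u w * vecMulVec u' w' = (w ⬝ᵥ u') • vecMulVec u w' := by
  refine Matrix.ext fun j k => ?_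
  simp only [mul_apply, vecMulVec_apply, Matrix.smul_apply, smul_eq_mul, dotProduct,
    Finset.sum_mul]
  exact Finset.sum_congr rfl fun l _ => by ring

lemma smat_eq {n i : ℕ} (h : i + 1 < n) :
    Smat n i = 1 + vecMulVec (uvec n i) (wvec n i) := by
  ext j k : 1
  simp only [Smat, Matrix.of_apply, Matrix.add_apply, Matrix.one_apply,
    vecMulVec_apply, uvec, wvec]
  by_cases h1 : j.val = i <;> by_cases h2 : k.val = i <;>
    by_cases h3 : j.val = i + 1 <;> by_cases h4 : k.val = i + 1 <;>
    by_cases h5 : j = k <;>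
    simp_all [Fin.ext_iff] <;> first | ring | omega

lemma smat_sq {n i : ℕ} (h : i + 1 < n) : Smat n i * Smat n i = 1 := by
  rw [smat_eq h]
  rw [add_mul, mul_add, mul_add, vmv_mul, dot_self h]
  simp only [one_mul, mul_one]
  module

lemma smat_comm {n i j : ℕ} (hi : i + 1 < n) (hj : j + 1 < n)
    (hij : i + 2 ≤ j ∨ j + 2 ≤ i) :
    Smat n i * Smat n j = Smat n j * Smat n i := by
  rw [smat_eq hi, smat_eq hj]
  rw [add_mul, mul_add, mul_add, add_mul, mul_add, mul_add, vmv_mul, vmv_mul,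
    dot_far hij, dot_far (by omega : j + 2 ≤ i ∨ i + 2 ≤ j)]
  simp only [one_mul, mul_one, zero_smul]
  abel

end TwinAux

/-- For every `n ≥ 2` there is a group homomorphism
`η₁ : Tₙ → GLₙ(ℤ[t^{±1}])` sending each generator `sᵢ` (0-indexed) to the matrix `Sᵢ`
agreeing with the identity except for the `2 × 2` block `[[1-t, t], [2-t, t-1]]`
in rows and columns `i, i+1`. -/
theorem statement2 (n : ℕ) (hn : 2 ≤ n) :
    ∃ η : PresentedGroup (twinRels n) →*
        Matrix.GeneralLinearGroup (Fin n) (LaurentPolynomial ℤ),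
      ∀ i : Fin (n - 1),
        (η (PresentedGroup.of i) : Matrix (Fin n) (Fin n) (LaurentPolynomial ℤ)) =
          Smat n i.val := by
  have hlt : ∀ i : Fin (n - 1), i.val + 1 < n := fun i => by
    have := i.isLt; omega
  let f : Fin (n - 1) → Matrix.GeneralLinearGroup (Fin n) (LaurentPolynomial ℤ) :=
    fun i => ⟨Smat n i.val, Smat n i.val, TwinAux.smat_sq (hlt i), TwinAux.smat_sq (hlt i)⟩
  have hf : ∀ i : Fin (n - 1), f i * f i = 1 := fun i =>
    Units.ext (TwinAux.smat_sq (hlt i))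
  have hcomm : ∀ i j : Fin (n-1), (i.val + 2 ≤ j.val ∨ j.val + 2 ≤ i.val) →
      f i * f j = f j * f i := fun i j hij =>
    Units.ext (TwinAux.smat_comm (hlt i) (hlt j) hij)
  have hrels : ∀ r ∈ twinRels n, FreeGroup.lift f r = 1 := by
    rintro r (⟨i, rfl⟩ | ⟨i, j, hij, rfl⟩)
    · simp only [_root_.map_mul, FreeGroup.lift_apply_of]
      exact hf i
    · simp only [_root_.map_mul, map_inv, FreeGroup.lift_apply_of]
      have hi : (f i)⁻¹ = f i := inv_eq_of_mul_eq_one_right (hf i)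
      have hj : (f j)⁻¹ = f j := inv_eq_of_mul_eq_one_right (hf j)
      rw [hi, hj, mul_assoc (f i) (f j), ← hcomm i j hij, ← mul_assoc, hf i,
        one_mul, hf j]
  refine ⟨PresentedGroup.toGroup hrels, fun i => ?_⟩
  rw [PresentedGroup.toGroup.of]
end
end

section
/- For every n ≥ 2 and every 1 ≤ i ≤ n−1, the matrix S_i fixes the all-ones column vector: S_i · (1,1,…,1)ᵀ = (1,1,…,1)ᵀ. Consequently, for n ≥ 2 the ℤ[t^{±1}]-submodule of (ℤ[t^{±1}])ⁿ spanned by (1,1,…,1)ᵀ is a nonzero proper submodule invariant under S_i for every i, i.e. the representation η₁ : T_n → GL_n(ℤ[t^{±1}]) given by s_i ↦ S_i is reducible. -/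
noncomputable section
open Matrix

lemma Smat_fix (n : ℕ) (i : Fin (n-1)) :
    Smat n i.val *ᵥ (fun _ => 1) = (fun _ => (1 : LaurentPolynomial ℤ)) := by
  have hi : i.val < n - 1 := i.isLt
  have hi1 : i.val + 1 < n := by omega
  have hi0 : i.val < n := by omega
  funext j
  simp only [mulVec, dotProduct, mul_one]
  set a : Fin n := ⟨i.val, hi0⟩
  set b : Fin n := ⟨i.val + 1, hi1⟩
  have hab : a ≠ b := by simp [a, b, Fin.ext_iff]
  by_cases hja : j.val = i.val
  · rw [Finset.sum_eq_add_of_mem a b (Finset.mem_univ a) (Finset.mem_univ b) hab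
      (fun k _ hk => ?_)]
    · simp [Smat, a, b, hja]
    · have h1 : k.val ≠ i.val := fun h => hk.1 (Fin.ext h)
      have h2 : k.val ≠ i.val + 1 := fun h => hk.2 (Fin.ext h)
      have h3 : j ≠ k := fun h => h1 (h ▸ hja)
      simp [Smat, hja, h1, h2, h3]
  · by_cases hjb : j.val = i.val + 1
    · rw [Finset.sum_eq_add_of_mem a b (Finset.mem_univ a) (Finset.mem_univ b) hab
        (fun k _ hk => ?_)]
      · simp [Smat, a, b, hjb]; ring
      · have h1 : k.val ≠ i.val := fun h => hk.1 (Fin.ext h)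
        have h2 : k.val ≠ i.val + 1 := fun h => hk.2 (Fin.ext h)
        have h3 : j ≠ k := fun h => h2 (h ▸ hjb)
        simp [Smat, hja, hjb, h1, h2, h3]
    · rw [Finset.sum_eq_single j (fun k _ hk => ?_) (by simp)]
      · simp [Smat, hja, hjb]
      · have : j ≠ k := fun h => hk h.symm
        simp only [Smat, Matrix.of_apply]
        rw [if_neg (fun h => hja h.1), if_neg (fun h => hja h.1),
          if_neg (fun h => hjb h.1), if_neg (fun h => hjb h.1), if_neg this]

/-- For every `n ≥ 2`, each matrix `Sᵢ` fixes the all-ones vector, and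
consequently the `ℤ[t^{±1}]`-submodule of `(ℤ[t^{±1}])ⁿ` spanned by the all-ones vector
is a nonzero proper submodule invariant under every `Sᵢ`; i.e. the representation
`η₁ : Tₙ → GLₙ(ℤ[t^{±1}])`, `sᵢ ↦ Sᵢ`, is reducible. -/
theorem statement3 (n : ℕ) (hn : 2 ≤ n) :
    (∀ i : Fin (n - 1),
      Smat n i.val *ᵥ (fun _ => 1) = (fun _ => (1 : LaurentPolynomial ℤ))) ∧
    Submodule.span (LaurentPolynomial ℤ)
        {(fun _ => 1 : Fin n → LaurentPolynomial ℤ)} ≠ ⊥ ∧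
    Submodule.span (LaurentPolynomial ℤ)
        {(fun _ => 1 : Fin n → LaurentPolynomial ℤ)} ≠ ⊤ ∧
    (∀ i : Fin (n - 1), ∀ v ∈ Submodule.span (LaurentPolynomial ℤ)
        {(fun _ => 1 : Fin n → LaurentPolynomial ℤ)},
      Smat n i.val *ᵥ v ∈ Submodule.span (LaurentPolynomial ℤ)
        {(fun _ => 1 : Fin n → LaurentPolynomial ℤ)}) := by
  have h0 : (0 : ℕ) < n := by omega
  have h1 : (1 : ℕ) < n := by omega
  refine ⟨Smat_fix n, ?_, ?_, ?_⟩
  · intro h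
    rw [Submodule.span_singleton_eq_bot] at h
    have := congrFun h ⟨0, h0⟩
    simp at this
  · intro h
    have hmem : (Pi.single ⟨0, h0⟩ 1 : Fin n → LaurentPolynomial ℤ) ∈
        Submodule.span (LaurentPolynomial ℤ)
        {(fun _ => 1 : Fin n → LaurentPolynomial ℤ)} := h ▸ Submodule.mem_top
    rw [Submodule.mem_span_singleton] at hmem
    obtain ⟨c, hc⟩ := hmem
    have e0 := congrFun hc ⟨0, h0⟩
    have e1 := congrFun hc ⟨1, h1⟩
    simp [Pi.single_apply, Fin.ext_iff] at e0 e1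
    rw [e1] at e0
    exact one_ne_zero e0.symm
  · intro i v hv
    rw [Submodule.mem_span_singleton] at hv ⊢
    obtain ⟨c, rfl⟩ := hv
    exact ⟨c, by rw [mulVec_smul, Smat_fix]⟩
end
end

section
/- For n = 2 and for n = 3, the group homomorphism η₁ : T_n → GL_n(ℤ[t^{±1}]) sending s_i to S_i is injective (i.e. the representation η₁ is faithful). -/
noncomputable section
open Matrix

/-! ### Auxiliary: evaluation of Laurent polynomials at `t = 2` -/

def ev2 : LaurentPolynomial ℤ →+* ℚ :=
  ((AddMonoidAlgebra.lift ℤ ℚ ℤ)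
    ((Units.coeHom ℚ).comp (zpowersHom ℚˣ (Units.mk0 2 two_ne_zero)))).toRingHom

lemma ev2_T : ev2 (LaurentPolynomial.T 1) = 2 := by
  show ((AddMonoidAlgebra.lift ℤ ℚ ℤ) _) (AddMonoidAlgebra.single 1 1) = 2
  rw [AddMonoidAlgebra.lift_single, one_smul, MonoidHom.comp_apply, zpowersHom_apply]
  show (((Units.mk0 (2:ℚ) two_ne_zero) ^ (1:ℤ) : ℚˣ) : ℚ) = 2
  rw [zpow_one]; rfl

/-! ### Auxiliary: `ZMod 0 = ℤ` bookkeeping -/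

def zc (i : ZMod 0) : ℤ := i
lemma zc_add (i j : ZMod 0) : zc (i + j) = zc i + zc j := rfl
lemma zc_sub (i j : ZMod 0) : zc (i - j) = zc i - zc j := rfl
lemma zc_zero : zc 0 = 0 := rfl
lemma zc_one : zc 1 = 1 := rfl
lemma zc_inj {i j : ZMod 0} (h : zc i = zc j) : i = j := h

/-! ### Auxiliary: universal property of the infinite dihedral group -/

section DLift
variable {G : Type*} [Group G]

lemma conj_zpow_key (a c : G) (ha : a * a = 1) (hc : a * c * a = c⁻¹) (i : ℤ) :
    a * c ^ i * a = c ^ (-i) := by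
  have hainv : a⁻¹ = a := by rw [inv_eq_iff_mul_eq_one, ha]
  have h1 : a * c ^ i * a⁻¹ = (a * c * a⁻¹) ^ i := by
    rw [← MulAut.conj_apply, ← MulAut.conj_apply, map_zpow]
  rw [hainv] at h1
  rw [h1, hc, _root_.inv_zpow, _root_.zpow_neg]

def dihedralLift (a b : G) (ha : a * a = 1) (hb : b * b = 1) : DihedralGroup 0 →* G where
  toFun := fun x => match x with
    | .r i => (a * b) ^ zc i
    | .sr i => a * (a * b) ^ zc i
  map_one' := by
    show (a*b) ^ zc 0 = 1
    rw [zc_zero, zpow_zero]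
  map_mul' := by
    have ha' : a⁻¹ = a := by rw [inv_eq_iff_mul_eq_one, ha]
    have hb' : b⁻¹ = b := by rw [inv_eq_iff_mul_eq_one, hb]
    have hc : a * (a * b) * a = (a * b)⁻¹ := by
      rw [_root_.mul_inv_rev, ha', hb', ← mul_assoc, ha, one_mul]
    have key : ∀ i : ℤ, a * (a*b) ^ i * a = (a*b) ^ (-i) :=
      conj_zpow_key a (a*b) ha hc
    have key' : ∀ i : ℤ, a * (a*b) ^ i = (a*b) ^ (-i) * a := by
      intro i
      have h := key i
      rw [← h, mul_assoc, mul_assoc, ha, mul_one]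
    rintro (i | i) (j | j)
    · show (a*b) ^ zc (i + j) = (a*b) ^ zc i * (a*b) ^ zc j
      rw [zc_add, _root_.zpow_add]
    · show a * (a*b) ^ zc (j - i) = (a*b) ^ zc i * (a * (a*b) ^ zc j)
      have h2 : (a*b) ^ zc i * a = a * (a*b) ^ (-(zc i)) := by
        rw [key' (-(zc i)), neg_neg]
      rw [← mul_assoc, h2, mul_assoc, ← _root_.zpow_add, zc_sub]
      congr 1
      ring
    · show a * (a*b) ^ zc (i + j) = a * (a*b) ^ zc i * (a*b) ^ zc j
      rw [mul_assoc, ← _root_.zpow_add, zc_add]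
    · show (a*b) ^ zc (j - i) = a * (a*b) ^ zc i * (a * (a*b) ^ zc j)
      rw [key' (zc i), mul_assoc, ← mul_assoc a a, ha, one_mul, ← _root_.zpow_add, zc_sub]
      congr 1
      ring

lemma dihedralLift_sr (a b : G) (ha : a * a = 1) (hb : b * b = 1) (i : ZMod 0) :
    dihedralLift a b ha hb (.sr i) = a * (a * b) ^ zc i := rfl
lemma dihedralLift_r (a b : G) (ha : a * a = 1) (hb : b * b = 1) (i : ZMod 0) :
    dihedralLift a b ha hb (.r i) = (a * b) ^ zc i := rfl
lemma dihedralLift_sr_zero (a b : G) (ha : a * a = 1) (hb : b * b = 1) :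
    dihedralLift a b ha hb (.sr 0) = a := by
  rw [dihedralLift_sr, zc_zero, zpow_zero, mul_one]
lemma dihedralLift_sr_one (a b : G) (ha : a * a = 1) (hb : b * b = 1) :
    dihedralLift a b ha hb (.sr 1) = b := by
  rw [dihedralLift_sr, zc_one, zpow_one, ← mul_assoc, ha, one_mul]

end DLift

/-! ### Relations hold in the presented group -/

lemma presented_sq {n : ℕ} (i : Fin (n - 1)) :
    (PresentedGroup.of (rels := twinRels n) i) * PresentedGroup.of i = 1 := by
  have : FreeGroup.of i * FreeGroup.of i ∈ twinRels n := Or.inl ⟨i, rfl⟩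
  have h := (QuotientGroup.eq_one_iff
      (FreeGroup.of i * FreeGroup.of i : FreeGroup (Fin (n-1)))).2
    (Subgroup.subset_normalClosure this)
  exact h

/-! ### concrete 3×3 matrices -/

abbrev M0 : Matrix (Fin 3) (Fin 3) ℚ := !![-1,2,0; 0,1,0; 0,0,1]
abbrev M1 : Matrix (Fin 3) (Fin 3) ℚ := !![1,0,0; 0,-1,2; 0,0,1]
abbrev Nm : Matrix (Fin 3) (Fin 3) ℚ := !![1,4,-4; 0,1,0; 0,0,1]
abbrev Nm' : Matrix (Fin 3) (Fin 3) ℚ := !![1,-4,4; 0,1,0; 0,0,1]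

lemma ev2_Smat0 : ev2.mapMatrix (Smat 3 0) = M0 := by
  ext i j
  fin_cases i <;> fin_cases j <;>
    simp [Smat, RingHom.mapMatrix_apply, Matrix.map_apply, ev2_T, map_sub, _root_.map_one,
      _root_.map_zero, map_ofNat, Matrix.vecHead, Matrix.vecTail] <;> norm_num [ev2_T]

lemma ev2_Smat1 : ev2.mapMatrix (Smat 3 1) = M1 := by
  ext i j
  fin_cases i <;> fin_cases j <;>
    simp [Smat, RingHom.mapMatrix_apply, Matrix.map_apply, ev2_T, map_sub, _root_.map_one,
      _root_.map_zero, map_ofNat, Matrix.vecHead, Matrix.vecTail] <;> norm_num [ev2_T]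

/-! ### matrix computations -/

abbrev Mm : Matrix (Fin 3) (Fin 3) ℚ := !![-1,-2,4; 0,-1,2; 0,0,1]

def fmat (n : ℤ) : Matrix (Fin 3) (Fin 3) ℚ := !![1, 4*n, -4*n; 0,1,0; 0,0,1]

lemma M0_mul_M1 : M0 * M1 = Mm := by
  ext i j
  fin_cases i <;> fin_cases j <;>
    simp [Matrix.mul_apply, Fin.sum_univ_three, Matrix.vecHead, Matrix.vecTail] <;> ring

lemma Mm_mul_Mm : Mm * Mm = Nm := by
  ext i j
  fin_cases i <;> fin_cases j <;>
    simp [Matrix.mul_apply, Fin.sum_univ_three, Matrix.vecHead, Matrix.vecTail] <;> ring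

lemma Nm_mul_Nm' : Nm * Nm' = (1 : Matrix (Fin 3) (Fin 3) ℚ) := by
  ext i j
  fin_cases i <;> fin_cases j <;>
    simp [Matrix.mul_apply, Fin.sum_univ_three, Matrix.vecHead, Matrix.vecTail, Matrix.one_apply] <;> ring

lemma fmat_zero : fmat 0 = 1 := by
  ext i j
  fin_cases i <;> fin_cases j <;>
    simp [fmat, Matrix.one_apply, Matrix.vecHead, Matrix.vecTail]

lemma fmat_succ (n : ℤ) : fmat n * Nm = fmat (n+1) := by
  ext i j
  fin_cases i <;> fin_cases j <;>
    simp [fmat, Matrix.mul_apply, Fin.sum_univ_three, Matrix.vecHead, Matrix.vecTail] <;> push_cast <;> ring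

lemma fmat_pred (n : ℤ) : fmat n * Nm' = fmat (n-1) := by
  ext i j
  fin_cases i <;> fin_cases j <;>
    simp [fmat, Matrix.mul_apply, Fin.sum_univ_three, Matrix.vecHead, Matrix.vecTail] <;> push_cast <;> ring

lemma det_M0 : M0.det = -1 := by
  simp [Matrix.det_fin_three]

lemma det_Mm : Mm.det = 1 := by
  simp [Matrix.det_fin_three, Matrix.vecHead, Matrix.vecTail]

/-- power formula for the unipotent unit -/
lemma unit_zpow_val (v : (Matrix (Fin 3) (Fin 3) ℚ)ˣ) (hv : (v : Matrix (Fin 3) (Fin 3) ℚ) = Nm)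
    (n : ℤ) : ((v ^ n : (Matrix (Fin 3) (Fin 3) ℚ)ˣ) : Matrix (Fin 3) (Fin 3) ℚ) = fmat n := by
  have hv' : ((v⁻¹ : (Matrix (Fin 3) (Fin 3) ℚ)ˣ) : Matrix (Fin 3) (Fin 3) ℚ) = Nm' := by
    calc (↑(v⁻¹) : Matrix (Fin 3) (Fin 3) ℚ) = ↑(v⁻¹) * (Nm * Nm') := by
          rw [Nm_mul_Nm', mul_one]
      _ = (↑(v⁻¹) * ↑v) * Nm' := by rw [hv, mul_assoc]
      _ = Nm' := by rw [← Units.val_mul, inv_mul_cancel, Units.val_one, one_mul]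
  induction n using Int.induction_on with
  | zero => rw [zpow_zero, Units.val_one, fmat_zero]
  | succ k ih =>
      rw [_root_.zpow_add_one, Units.val_mul, ih, hv, fmat_succ]
  | pred k ih =>
      rw [_root_.zpow_sub_one, Units.val_mul, ih, hv', fmat_pred]

/-! ### powers of `r 1` in the infinite dihedral group -/

def zi (n : ℤ) : ZMod 0 := n
lemma zi_zc (d : ZMod 0) : zi (zc d) = d := rfl

lemma r_one_zpow : ∀ n : ℤ, (DihedralGroup.r 1 : DihedralGroup 0) ^ n = DihedralGroup.r (zi n) := by
  have hinv : (DihedralGroup.r 1 : DihedralGroup 0)⁻¹ = DihedralGroup.r (zi (-1)) := by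
    apply inv_eq_of_mul_eq_one_right
    show DihedralGroup.r 1 * DihedralGroup.r (-1) = 1
    rw [DihedralGroup.r_mul_r, DihedralGroup.one_def]; rfl
  intro n
  induction n using Int.induction_on with
  | zero => rw [zpow_zero, DihedralGroup.one_def]; rfl
  | succ k ih =>
      rw [_root_.zpow_add_one, ih, DihedralGroup.r_mul_r]; rfl
  | pred k ih =>
      rw [_root_.zpow_sub_one, ih, hinv, DihedralGroup.r_mul_r]; rfl

lemma r_eq_zpow (d : ZMod 0) :
    (DihedralGroup.r d : DihedralGroup 0) = (DihedralGroup.r 1 : DihedralGroup 0) ^ zc d := by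
  rw [r_one_zpow, zi_zc]

/-! ### Main theorem -/


/-- For `n = 2` and `n = 3`, the homomorphism `η₁ : Tₙ → GLₙ(ℤ[t^{±1}])`
sending each generator `sᵢ` to `Sᵢ` is injective (i.e. `η₁` is faithful). -/
theorem statement6 :
    (∀ η : PresentedGroup (twinRels 2) →*
        Matrix.GeneralLinearGroup (Fin 2) (LaurentPolynomial ℤ),
      (∀ i : Fin (2 - 1),
        (η (PresentedGroup.of i) : Matrix (Fin 2) (Fin 2) (LaurentPolynomial ℤ)) =
          Smat 2 i.val) →
      Function.Injective η) ∧
    (∀ η : PresentedGroup (twinRels 3) →*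
        Matrix.GeneralLinearGroup (Fin 3) (LaurentPolynomial ℤ),
      (∀ i : Fin (3 - 1),
        (η (PresentedGroup.of i) : Matrix (Fin 3) (Fin 3) (LaurentPolynomial ℤ)) =
          Smat 3 i.val) →
      Function.Injective η) := by
  constructor
  · -- n = 2
    intro η hη
    set a := PresentedGroup.of (rels := twinRels 2) (0 : Fin 1) with ha_def
    have ha : a * a = 1 := presented_sq 0
    have hrel : ∀ r ∈ twinRels 2,
        FreeGroup.lift (fun _ : Fin 1 => (DihedralGroup.sr 0 : DihedralGroup 0)) r = 1 := by
      rintro r (⟨i, rfl⟩ | ⟨i, j, hij, rfl⟩)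
      · simp only [_root_.map_mul, FreeGroup.lift_apply_of]
        exact DihedralGroup.sr_mul_self _
      · exfalso
        have := i.isLt
        have := j.isLt
        omega
    set θ := PresentedGroup.toGroup hrel with hθ_def
    set χ := dihedralLift a a ha ha with hχ_def
    have hid : ∀ x : PresentedGroup (twinRels 2), χ (θ x) = x := by
      have hcomp : χ.comp θ = MonoidHom.id _ := by
        apply PresentedGroup.ext
        intro i
        fin_cases i
        rw [MonoidHom.comp_apply, MonoidHom.id_apply, hθ_def, PresentedGroup.toGroup.of,
          hχ_def]
        exact dihedralLift_sr_zero a a ha ha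
      intro x
      exact DFunLike.congr_fun hcomp x
    rw [injective_iff_map_eq_one]
    intro x hx
    rcases hd : θ x with i | i
    · have h := hid x
      rw [hd, hχ_def, dihedralLift_r, ha, _root_.one_zpow] at h
      exact h.symm
    · exfalso
      have hxa : x = a := by
        have h := hid x
        rw [hd, hχ_def, dihedralLift_sr, ha, _root_.one_zpow, mul_one] at h
        exact h.symm
      rw [hxa] at hx
      have h2 : (η a).val = Smat 2 0 := hη 0
      have h3 : Smat 2 0 = (1 : Matrix (Fin 2) (Fin 2) (LaurentPolynomial ℤ)) := by
        rw [← h2, hx, Units.val_one]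
      have h4 := congrFun (congrFun h3 0) 1
      have h5 : Smat 2 0 0 1 = LaurentPolynomial.T 1 := by
        simp [Smat]
      have h6 : (1 : Matrix (Fin 2) (Fin 2) (LaurentPolynomial ℤ)) 0 1 = 0 := by
        simp [Matrix.one_apply]
      rw [h5, h6] at h4
      have hT : LaurentPolynomial.T (R := ℤ) 1 ≠ 0 := by
        have : (Finsupp.single (1 : ℤ) (1 : ℤ) : ℤ →₀ ℤ) ≠ 0 :=
          fun h => one_ne_zero (Finsupp.single_eq_zero.mp h)
        exact (LaurentPolynomial.isUnit_T 1).ne_zero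
      exact hT h4
  · -- n = 3
    intro η hη
    set a := PresentedGroup.of (rels := twinRels 3) (0 : Fin 2) with ha_def
    set b := PresentedGroup.of (rels := twinRels 3) (1 : Fin 2) with hb_def
    have ha : a * a = 1 := presented_sq 0
    have hb : b * b = 1 := presented_sq 1
    have hrel : ∀ r ∈ twinRels 3,
        FreeGroup.lift
          (fun i : Fin 2 => (DihedralGroup.sr (zi i.val) : DihedralGroup 0)) r = 1 := by
      rintro r (⟨i, rfl⟩ | ⟨i, j, hij, rfl⟩)
      · simp only [_root_.map_mul, FreeGroup.lift_apply_of]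
        exact DihedralGroup.sr_mul_self _
      · exfalso
        have := i.isLt
        have := j.isLt
        omega
    set θ := PresentedGroup.toGroup hrel with hθ_def
    set χ := dihedralLift a b ha hb with hχ_def
    have hχ0 : χ (DihedralGroup.sr 0) = a := dihedralLift_sr_zero a b ha hb
    have hχ1 : χ (DihedralGroup.sr 1) = b := dihedralLift_sr_one a b ha hb
    have hid : ∀ x : PresentedGroup (twinRels 3), χ (θ x) = x := by
      have hcomp : χ.comp θ = MonoidHom.id _ := by
        apply PresentedGroup.ext
        intro i
        fin_cases i
        · rw [MonoidHom.comp_apply, MonoidHom.id_apply, hθ_def, PresentedGroup.toGroup.of]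
          exact hχ0
        · rw [MonoidHom.comp_apply, MonoidHom.id_apply, hθ_def, PresentedGroup.toGroup.of]
          exact hχ1
      intro x
      exact DFunLike.congr_fun hcomp x
    -- the evaluated representation
    set Φ : (Matrix (Fin 3) (Fin 3) (LaurentPolynomial ℤ))ˣ →* (Matrix (Fin 3) (Fin 3) ℚ)ˣ :=
      Units.map (ev2.mapMatrix : Matrix (Fin 3) (Fin 3) (LaurentPolynomial ℤ) →+*
        Matrix (Fin 3) (Fin 3) ℚ).toMonoidHom with hΦ_def
    set ρ : DihedralGroup 0 →* (Matrix (Fin 3) (Fin 3) ℚ)ˣ := Φ.comp (η.comp χ) with hρ_def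
    have hu0 : ((ρ (DihedralGroup.sr 0) : (Matrix (Fin 3) (Fin 3) ℚ)ˣ) :
        Matrix (Fin 3) (Fin 3) ℚ) = M0 := by
      rw [hρ_def, MonoidHom.comp_apply, MonoidHom.comp_apply, hχ0, hΦ_def, Units.coe_map]
      show ev2.mapMatrix ((η a : (Matrix (Fin 3) (Fin 3) (LaurentPolynomial ℤ))ˣ) :
        Matrix (Fin 3) (Fin 3) (LaurentPolynomial ℤ)) = M0
      have := hη 0
      rw [ha_def]
      rw [this]
      exact ev2_Smat0
    have hu1 : ((ρ (DihedralGroup.sr 1) : (Matrix (Fin 3) (Fin 3) ℚ)ˣ) :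
        Matrix (Fin 3) (Fin 3) ℚ) = M1 := by
      rw [hρ_def, MonoidHom.comp_apply, MonoidHom.comp_apply, hχ1, hΦ_def, Units.coe_map]
      show ev2.mapMatrix ((η b : (Matrix (Fin 3) (Fin 3) (LaurentPolynomial ℤ))ˣ) :
        Matrix (Fin 3) (Fin 3) (LaurentPolynomial ℤ)) = M1
      have := hη 1
      rw [hb_def]
      rw [this]
      exact ev2_Smat1
    have hsr01 : (DihedralGroup.r 1 : DihedralGroup 0) =
        DihedralGroup.sr 0 * DihedralGroup.sr 1 := by
      rw [DihedralGroup.sr_mul_sr, sub_zero]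
    set w := ρ (DihedralGroup.r 1) with hw_def
    have hwval : ((w : (Matrix (Fin 3) (Fin 3) ℚ)ˣ) : Matrix (Fin 3) (Fin 3) ℚ) = Mm := by
      rw [hw_def, hsr01, _root_.map_mul, Units.val_mul, hu0, hu1, M0_mul_M1]
    have hρr : ∀ i : ZMod 0, ρ (DihedralGroup.r i) = w ^ zc i := by
      intro i
      rw [r_eq_zpow i, map_zpow, hw_def]
    -- determinant homomorphism
    set δ : (Matrix (Fin 3) (Fin 3) ℚ)ˣ →* ℚˣ := Units.map Matrix.detMonoidHom with hδ_def
    have hδw : δ w = 1 := by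
      apply Units.ext
      rw [hδ_def, Units.coe_map]
      show (w : Matrix (Fin 3) (Fin 3) ℚ).det = ((1 : ℚˣ) : ℚ)
      rw [hwval, det_Mm, Units.val_one]
    have hδu0 : ((δ (ρ (DihedralGroup.sr 0)) : ℚˣ) : ℚ) = -1 := by
      rw [hδ_def, Units.coe_map]
      show (((ρ (DihedralGroup.sr 0) : (Matrix (Fin 3) (Fin 3) ℚ)ˣ) :
        Matrix (Fin 3) (Fin 3) ℚ)).det = -1
      rw [hu0, det_M0]
    -- kernel computation
    rw [injective_iff_map_eq_one]
    intro x hx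
    have hρ1 : ρ (θ x) = 1 := by
      rw [hρ_def, MonoidHom.comp_apply, MonoidHom.comp_apply, hid x, hx, _root_.map_one]
    rcases hd : θ x with i | i
    · -- rotation case
      rw [hd] at hρ1
      rw [hρr i] at hρ1
      -- pass to the square
      have hsq : (w * w) ^ zc i = 1 := by
        have h2 : w * w = w ^ (2 : ℤ) := by rw [zpow_two]
        rw [h2, ← _root_.zpow_mul, mul_comm, _root_.zpow_mul, hρ1, _root_.one_zpow]
      have hvval : ((w * w : (Matrix (Fin 3) (Fin 3) ℚ)ˣ) : Matrix (Fin 3) (Fin 3) ℚ) = Nm := by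
        rw [Units.val_mul, hwval, Mm_mul_Mm]
      have hfz := unit_zpow_val (w * w) hvval (zc i)
      rw [hsq, Units.val_one] at hfz
      have h4 := congrFun (congrFun hfz.symm 0) 1
      have h5 : fmat (zc i) 0 1 = 4 * (zc i : ℚ) := by
        simp [fmat]
      have h6 : (1 : Matrix (Fin 3) (Fin 3) ℚ) 0 1 = 0 := by
        simp [Matrix.one_apply]
      rw [h5, h6] at h4
      have h7 : zc i = 0 := by
        have : (zc i : ℚ) = 0 := by linarith
        exact_mod_cast this
      have h8 : i = 0 := zc_inj (by rw [h7, zc_zero])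
      have h9 : θ x = 1 := by rw [hd, h8, ← DihedralGroup.one_def]
      rw [← hid x, h9, _root_.map_one]
    · -- reflection case: contradiction via determinant
      exfalso
      rw [hd] at hρ1
      have hsplit : (DihedralGroup.sr i : DihedralGroup 0) =
          DihedralGroup.sr 0 * DihedralGroup.r i := by
        rw [DihedralGroup.sr_mul_r, zero_add]
      rw [hsplit, _root_.map_mul, hρr i] at hρ1
      have hδ1 := congrArg δ hρ1
      rw [_root_.map_mul, map_zpow, hδw, _root_.one_zpow, mul_one, _root_.map_one] at hδ1
      have := hδu0
      rw [hδ1, Units.val_one] at this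
      norm_num at this
end
end

section
/- Let n ≥ 3 and let ĥ : VT_n → GL_n(ℤ[t^{±1}]) be a group homomorphism such that ĥ(s_i) = S_i for all 1 ≤ i ≤ n−1 and such that ĥ is 2-local, i.e. for each i, ĥ(ρ_i) agrees with the identity matrix except possibly in rows and columns i, i+1. Then there exists a unit b of ℤ[t^{±1}] such that for every 1 ≤ i ≤ n−1, ĥ(ρ_i) is the matrix agreeing with the identity except in rows and columns i, i+1, where it has the 2×2 block [[0, b],[b^{-1}, 0]]. -/
noncomputable section
open Matrix

/-- The defining relations of the virtual twin group `VTₙ` on generators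
`s_0, …, s_{n-2}` (the `Sum.inl` generators, 0-indexed) and `ρ_0, …, ρ_{n-2}`
(the `Sum.inr` generators, 0-indexed). -/
def vtRels (n : ℕ) : Set (FreeGroup (Fin (n - 1) ⊕ Fin (n - 1))) :=
  {r | (∃ i : Fin (n - 1),
          r = FreeGroup.of (Sum.inl i) * FreeGroup.of (Sum.inl i)) ∨
       (∃ i j : Fin (n - 1), (i.val + 2 ≤ j.val ∨ j.val + 2 ≤ i.val) ∧
          r = FreeGroup.of (Sum.inl i) * FreeGroup.of (Sum.inl j) *
              (FreeGroup.of (Sum.inl i))⁻¹ * (FreeGroup.of (Sum.inl j))⁻¹) ∨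
       (∃ i j : Fin (n - 1), j.val = i.val + 1 ∧
          r = FreeGroup.of (Sum.inr i) * FreeGroup.of (Sum.inr j) * FreeGroup.of (Sum.inr i) *
              (FreeGroup.of (Sum.inr j) * FreeGroup.of (Sum.inr i) * FreeGroup.of (Sum.inr j))⁻¹) ∨
       (∃ i j : Fin (n - 1), (i.val + 2 ≤ j.val ∨ j.val + 2 ≤ i.val) ∧
          r = FreeGroup.of (Sum.inr i) * FreeGroup.of (Sum.inr j) *
              (FreeGroup.of (Sum.inr i))⁻¹ * (FreeGroup.of (Sum.inr j))⁻¹) ∨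
       (∃ i : Fin (n - 1),
          r = FreeGroup.of (Sum.inr i) * FreeGroup.of (Sum.inr i)) ∨
       (∃ i j : Fin (n - 1), (i.val + 2 ≤ j.val ∨ j.val + 2 ≤ i.val) ∧
          r = FreeGroup.of (Sum.inl i) * FreeGroup.of (Sum.inr j) *
              (FreeGroup.of (Sum.inl i))⁻¹ * (FreeGroup.of (Sum.inr j))⁻¹) ∨
       (∃ i j : Fin (n - 1), j.val = i.val + 1 ∧
          r = FreeGroup.of (Sum.inr i) * FreeGroup.of (Sum.inr j) * FreeGroup.of (Sum.inl i) *
              (FreeGroup.of (Sum.inl j) * FreeGroup.of (Sum.inr i) * FreeGroup.of (Sum.inr j))⁻¹)}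

/-- The `n × n` matrix over `ℤ[t^{±1}]` agreeing with the identity except in rows and
columns `i, i+1` (0-indexed), where it has the `2 × 2` block `[[0, u], [u⁻¹, 0]]`,
for a unit `u` of `ℤ[t^{±1}]`. -/
def Rmat (n i : ℕ) (u : (LaurentPolynomial ℤ)ˣ) : Matrix (Fin n) (Fin n) (LaurentPolynomial ℤ) :=
  Matrix.of fun j k =>
    if j.val = i ∧ k.val = i then 0
    else if j.val = i ∧ k.val = i + 1 then (u : LaurentPolynomial ℤ)
    else if j.val = i + 1 ∧ k.val = i then ((u⁻¹ : (LaurentPolynomial ℤ)ˣ) : LaurentPolynomial ℤ)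
    else if j.val = i + 1 ∧ k.val = i + 1 then 0
    else if j = k then 1 else 0


section VTHelpers

open LaurentPolynomial Polynomial

local notation "LP" => LaurentPolynomial ℤ

instance : NoZeroDivisors (LaurentPolynomial ℤ) :=
  inferInstanceAs (NoZeroDivisors (AddMonoidAlgebra ℤ ℤ))

private lemma two_sub_T_ne : (2 - T 1 : LaurentPolynomial ℤ) ≠ 0 := by
  have h1 : ((2 - X : ℤ[X]).toLaurent) = 2 - T 1 := by
    rw [map_sub, Polynomial.toLaurent_X, map_ofNat]
  rw [← h1]
  intro hh
  have h0 := Polynomial.toLaurent_injective (R := ℤ) (a₁ := 2 - X) (a₂ := 0) (by simpa using hh)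
  have h2 : (2 - X : ℤ[X]).coeff 1 = 0 := by rw [h0]; simp
  simp at h2

private lemma T_one_ne : (T 1 : LaurentPolynomial ℤ) ≠ 0 := (isUnit_T 1).ne_zero

private lemma relOne {α : Type*} {rels : Set (FreeGroup α)} {r : FreeGroup α} (hr : r ∈ rels) :
    (QuotientGroup.mk r : PresentedGroup rels) = 1 :=
  (QuotientGroup.eq_one_iff r).mpr (Subgroup.subset_normalClosure hr)

private lemma sq_one (n : ℕ) (i : Fin (n - 1)) :
    (PresentedGroup.of (Sum.inr i) : PresentedGroup (vtRels n)) * PresentedGroup.of (Sum.inr i)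
      = 1 := by
  have := relOne (show _ ∈ vtRels n from Or.inr (Or.inr (Or.inr (Or.inr (Or.inl ⟨i, rfl⟩)))))
  simp only [PresentedGroup.of, ← _root_.map_mul]
  exact this

private lemma mix_rel (n : ℕ) (i j : Fin (n - 1)) (hj : j.val = i.val + 1) :
    (PresentedGroup.of (Sum.inr i) : PresentedGroup (vtRels n)) * PresentedGroup.of (Sum.inr j) *
      PresentedGroup.of (Sum.inl i)
    = PresentedGroup.of (Sum.inl j) * PresentedGroup.of (Sum.inr i) *
      PresentedGroup.of (Sum.inr j) := by
  have := relOne (show _ ∈ vtRels n from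
    Or.inr (Or.inr (Or.inr (Or.inr (Or.inr (Or.inr ⟨i, j, hj, rfl⟩))))))
  rw [← mul_inv_eq_one]
  simp only [PresentedGroup.of, ← _root_.map_mul, ← _root_.map_inv]
  exact this

variable {n i : ℕ} {x y p q : Fin n} {A M : Matrix (Fin n) (Fin n) (LaurentPolynomial ℤ)}

private lemma Smat_xx (hx : x.val = i) : Smat n i x x = 1 - T 1 := by simp [Smat, hx]
private lemma Smat_xy (hx : x.val = i) (hy : y.val = i + 1) : Smat n i x y = T 1 := by
  simp [Smat, hx, hy]
private lemma Smat_yx (hx : x.val = i) (hy : y.val = i + 1) : Smat n i y x = 2 - T 1 := by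
  simp [Smat, hx, hy]
private lemma Smat_yy (hy : y.val = i + 1) : Smat n i y y = T 1 - 1 := by simp [Smat, hy]
private lemma Smat_row_id (h1 : p.val ≠ i) (h2 : p.val ≠ i + 1) (q : Fin n) :
    Smat n i p q = if p = q then 1 else 0 := by simp [Smat, h1, h2]
private lemma Smat_col_id (h1 : q.val ≠ i) (h2 : q.val ≠ i + 1) (p : Fin n) :
    Smat n i p q = if p = q then 1 else 0 := by simp [Smat, h1, h2]

/-- `A` agrees with the identity outside rows and columns `i`, `i+1`. -/
private def IsLoc (A : Matrix (Fin n) (Fin n) (LaurentPolynomial ℤ)) (i : ℕ) : Prop :=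
  ∀ p l : Fin n, (p.val ≠ i ∧ p.val ≠ i + 1) ∨ (l.val ≠ i ∧ l.val ≠ i + 1) →
    A p l = if p = l then 1 else 0

private lemma mulA_left_in (hx : x.val = i) (hy : y.val = i + 1) (hA : IsLoc A i)
    (hp : p = x ∨ p = y) (q : Fin n) :
    (A * M) p q = A p x * M x q + A p y * M y q := by
  rw [Matrix.mul_apply]
  refine Fintype.sum_eq_add x y (fun e => by have h' := congrArg Fin.val e; omega)
    fun l ⟨h1, h2⟩ => ?_
  have hl1 : l.val ≠ i := fun e => h1 (Fin.ext (by omega))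
  have hl2 : l.val ≠ i + 1 := fun e => h2 (Fin.ext (by omega))
  rw [hA p l (Or.inr ⟨hl1, hl2⟩)]
  have hpl : ¬ p = l := by
    rcases hp with e | e
    · subst e; exact fun e2 => hl1 (e2 ▸ hx)
    · subst e; exact fun e2 => hl2 (e2 ▸ hy)
  rw [if_neg hpl, zero_mul]

private lemma mulA_left_out (hA : IsLoc A i) (hp : p.val ≠ i ∧ p.val ≠ i + 1) (q : Fin n) :
    (A * M) p q = M p q := by
  rw [Matrix.mul_apply, Fintype.sum_eq_single p fun l hl => by
    rw [hA p l (Or.inl hp), if_neg (fun hh => hl hh.symm), zero_mul]]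
  rw [hA p p (Or.inl hp), if_pos rfl, one_mul]

private lemma mulS_col_x (hx : x.val = i) (hy : y.val = i + 1)
    (M : Matrix (Fin n) (Fin n) (LaurentPolynomial ℤ)) (p : Fin n) :
    (M * Smat n i) p x = M p x * (1 - T 1) + M p y * (2 - T 1) := by
  rw [Matrix.mul_apply]
  rw [Fintype.sum_eq_add x y (fun e => by have h' := congrArg Fin.val e; omega)
    fun l ⟨h1, h2⟩ => by
      rw [Smat_row_id (fun hh => h1 (Fin.ext (hh.trans hx.symm)))
        (fun hh => h2 (Fin.ext (hh.trans hy.symm))), if_neg (fun hh => h1 hh), mul_zero]]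
  rw [Smat_xx hx, Smat_yx hx hy]

private lemma mulS_col_out (h1 : q.val ≠ i) (h2 : q.val ≠ i + 1)
    (M : Matrix (Fin n) (Fin n) (LaurentPolynomial ℤ)) (p : Fin n) :
    (M * Smat n i) p q = M p q := by
  rw [Matrix.mul_apply, Fintype.sum_eq_single q fun l hl => by
    rw [Smat_col_id h1 h2, if_neg hl, mul_zero]]
  rw [Smat_col_id h1 h2, if_pos rfl, mul_one]

private lemma Smul_row_x (hx : x.val = i) (hy : y.val = i + 1)
    (M : Matrix (Fin n) (Fin n) (LaurentPolynomial ℤ)) (q : Fin n) :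
    (Smat n i * M) x q = (1 - T 1) * M x q + T 1 * M y q := by
  rw [Matrix.mul_apply]
  rw [Fintype.sum_eq_add x y (fun e => by have h' := congrArg Fin.val e; omega)
    fun l ⟨h1, h2⟩ => by
      rw [Smat_col_id (fun hh => h1 (Fin.ext (hh.trans hx.symm)))
        (fun hh => h2 (Fin.ext (hh.trans hy.symm))), if_neg (fun hh => h1 hh.symm), zero_mul]]
  rw [Smat_xx hx, Smat_xy hx hy]

private lemma Smul_row_y (hx : x.val = i) (hy : y.val = i + 1)
    (M : Matrix (Fin n) (Fin n) (LaurentPolynomial ℤ)) (q : Fin n) :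
    (Smat n i * M) y q = (2 - T 1) * M x q + (T 1 - 1) * M y q := by
  rw [Matrix.mul_apply]
  rw [Fintype.sum_eq_add x y (fun e => by have h' := congrArg Fin.val e; omega)
    fun l ⟨h1, h2⟩ => by
      rw [Smat_col_id (fun hh => h1 (Fin.ext (hh.trans hx.symm)))
        (fun hh => h2 (Fin.ext (hh.trans hy.symm))), if_neg (fun hh => h2 hh.symm), zero_mul]]
  rw [Smat_yx hx hy, Smat_yy hy]

private lemma Smul_row_out (h1 : p.val ≠ i) (h2 : p.val ≠ i + 1)
    (M : Matrix (Fin n) (Fin n) (LaurentPolynomial ℤ)) (q : Fin n) :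
    (Smat n i * M) p q = M p q := by
  rw [Matrix.mul_apply, Fintype.sum_eq_single p fun l hl => by
    rw [Smat_row_id h1 h2, if_neg (fun hh => hl hh.symm), zero_mul]]
  rw [Smat_row_id h1 h2, if_pos rfl, one_mul]

/-- The key local analysis: two consecutive involutive local matrices `Ai`, `Aj` which
intertwine `Smat n i` and `Smat n (i+1)` have off-diagonal blocks given by a unit. -/
private lemma pair_analysis {n i : ℕ} {x y z : Fin n}
    (hx : x.val = i) (hy : y.val = i + 1) (hz : z.val = i + 2)
    {Ai Aj : Matrix (Fin n) (Fin n) (LaurentPolynomial ℤ)}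
    (hlI : IsLoc Ai i) (hlJ : IsLoc Aj (i + 1))
    (hsqI : Ai * Ai = 1) (hsqJ : Aj * Aj = 1)
    (hmix : Ai * Aj * Smat n i = Smat n (i + 1) * (Ai * Aj)) :
    Ai x x = 0 ∧ Ai y y = 0 ∧ Ai x y * Ai y x = 1 ∧
    Aj y y = 0 ∧ Aj z z = 0 ∧ Aj y z = Ai x y ∧ Aj z y = Ai y x := by
  have hxy : x ≠ y := fun e => by have h' := congrArg Fin.val e; omega
  have hxz : x ≠ z := fun e => by have h' := congrArg Fin.val e; omega
  have hyz : y ≠ z := fun e => by have h' := congrArg Fin.val e; omega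
  have hz' : z.val = (i + 1) + 1 := by omega
  have hJxq : ∀ q : Fin n, Aj x q = if x = q then 1 else 0 :=
    fun q => hlJ x q (Or.inl ⟨by omega, by omega⟩)
  have hJpx : ∀ p : Fin n, Aj p x = if p = x then 1 else 0 :=
    fun p => hlJ p x (Or.inr ⟨by omega, by omega⟩)
  have sq1 : Ai x x * Ai x x + Ai x y * Ai y x = 1 := by
    have e := congrFun (congrFun hsqI x) x
    rw [mulA_left_in hx hy hlI (Or.inl rfl)] at e
    rwa [Matrix.one_apply_eq] at e
  have sq2 : Ai y x * Ai x y + Ai y y * Ai y y = 1 := by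
    have e := congrFun (congrFun hsqI y) y
    rw [mulA_left_in hx hy hlI (Or.inr rfl)] at e
    rwa [Matrix.one_apply_eq] at e
  have sq1' : Aj y y * Aj y y + Aj y z * Aj z y = 1 := by
    have e := congrFun (congrFun hsqJ y) y
    rw [mulA_left_in hy hz' hlJ (Or.inl rfl)] at e
    rwa [Matrix.one_apply_eq] at e
  have sq2' : Aj z y * Aj y z + Aj z z * Aj z z = 1 := by
    have e := congrFun (congrFun hsqJ z) z
    rw [mulA_left_in hy hz' hlJ (Or.inr rfl)] at e
    rwa [Matrix.one_apply_eq] at e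
  have Pxx : (Ai * Aj) x x = Ai x x := by
    rw [mulA_left_in hx hy hlI (Or.inl rfl), hJxq x, hJpx y, if_pos rfl,
      if_neg (fun e => hxy e.symm)]
    ring
  have Pxy : (Ai * Aj) x y = Ai x y * Aj y y := by
    rw [mulA_left_in hx hy hlI (Or.inl rfl), hJxq y, if_neg hxy]
    ring
  have Pyx : (Ai * Aj) y x = Ai y x := by
    rw [mulA_left_in hx hy hlI (Or.inr rfl), hJxq x, hJpx y, if_pos rfl,
      if_neg (fun e => hxy e.symm)]
    ring
  have Pyy : (Ai * Aj) y y = Ai y y * Aj y y := by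
    rw [mulA_left_in hx hy hlI (Or.inr rfl), hJxq y, if_neg hxy]
    ring
  have Pyz : (Ai * Aj) y z = Ai y y * Aj y z := by
    rw [mulA_left_in hx hy hlI (Or.inr rfl), hJxq z, if_neg hxz]
    ring
  have Pz : ∀ q : Fin n, (Ai * Aj) z q = Aj z q :=
    fun q => mulA_left_out hlI ⟨by omega, by omega⟩ q
  have Pzx : (Ai * Aj) z x = 0 := by
    rw [Pz x, hJpx z, if_neg (fun e => hxz e.symm)]
  have E1 := congrFun (congrFun hmix x) x
  rw [mulS_col_x hx hy (Ai * Aj) x, Smul_row_out (i := i + 1) (by omega) (by omega) (Ai * Aj) x,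
    Pxx, Pxy] at E1
  have E2 := congrFun (congrFun hmix y) x
  rw [mulS_col_x hx hy (Ai * Aj) y, Smul_row_x (i := i + 1) hy hz' (Ai * Aj) x,
    Pyx, Pyy, Pzx] at E2
  have E3 := congrFun (congrFun hmix z) x
  rw [mulS_col_x hx hy (Ai * Aj) z, Smul_row_y (i := i + 1) hy hz' (Ai * Aj) x,
    Pzx, Pz y, Pyx] at E3
  have E4 := congrFun (congrFun hmix y) z
  rw [mulS_col_out (by omega) (by omega) (Ai * Aj) y, Smul_row_x (i := i + 1) hy hz' (Ai * Aj) z,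
    Pyz, Pz z] at E4
  set a := Ai x x with hadef
  set b := Ai x y with hbdef
  set c := Ai y x with hcdef
  set d := Ai y y with hddef
  set a' := Aj y y with ha'def
  set b' := Aj y z with hb'def
  set c' := Aj z y with hc'def
  set d' := Aj z z with hd'def
  have ht : (T 1 : LaurentPolynomial ℤ) ≠ 0 := T_one_ne
  have h2t : (2 - T 1 : LaurentPolynomial ℤ) ≠ 0 := two_sub_T_ne
  have hda : d * a' = 0 := by
    have h0 : (d * a') * (2 - T 1) = 0 := by linear_combination E2
    exact (mul_eq_zero.mp h0).resolve_right h2t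
  have hE1' : b * a' * (2 - T 1) = a * T 1 := by linear_combination E1
  have hdb : d * b' = d' := by
    have h0 : T 1 * (d * b') = T 1 * d' := by linear_combination E4
    exact mul_left_cancel₀ ht h0
  have hcc : c' = c := by
    have h0 : c' * (2 - T 1) = c * (2 - T 1) := by linear_combination E3
    exact mul_right_cancel₀ h2t h0
  have ha : a = 0 := by
    by_contra h0
    have ha'ne : a' ≠ 0 := by
      intro e
      have h1 : a * T 1 = 0 := by rw [← hE1', e]; ring
      rcases mul_eq_zero.mp h1 with h2 | h2
      · exact h0 h2
      · exact ht h2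
    have hd0 : d = 0 := (mul_eq_zero.mp hda).resolve_right ha'ne
    have hd'0 : d' = 0 := by rw [← hdb, hd0, zero_mul]
    have hbc' : b' * c' = 1 := by
      rw [hd'0] at sq2'
      linear_combination sq2'
    have haa : a' * a' = 0 := by linear_combination sq1' - hbc'
    exact ha'ne (mul_self_eq_zero.mp haa)
  have hbc : b * c = 1 := by linear_combination sq1 - a * ha
  have hb0 : b ≠ 0 := left_ne_zero_of_mul_eq_one hbc
  have ha' : a' = 0 := by
    have h0 : b * (a' * (2 - T 1)) = 0 := by linear_combination hE1' + T 1 * ha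
    have h1 := (mul_eq_zero.mp h0).resolve_left hb0
    exact (mul_eq_zero.mp h1).resolve_right h2t
  have hd : d = 0 := by
    have h0 : d * d = 0 := by linear_combination sq2 - hbc
    exact mul_self_eq_zero.mp h0
  have hd' : d' = 0 := by rw [← hdb, hd, zero_mul]
  have hb'c' : b' * c' = 1 := by linear_combination sq1' - a' * ha'
  have hb' : b' = b := by
    have h1 : b' * c = 1 := by rw [← hcc]; exact hb'c'
    have h2 : (b' - b) * c = 0 := by linear_combination h1 - hbc
    have h3 := (mul_eq_zero.mp h2).resolve_right (right_ne_zero_of_mul_eq_one hbc)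
    exact sub_eq_zero.mp h3
  exact ⟨ha, hd, hbc, ha', hd', hb', hcc⟩

end VTHelpers

/-- Let `n ≥ 3` and let `ĥ : VTₙ → GLₙ(ℤ[t^{±1}])` be a group homomorphism
with `ĥ(sᵢ) = Sᵢ` for all `i`, which is 2-local, i.e. each `ĥ(ρᵢ)` agrees with the
identity matrix except possibly in rows and columns `i, i+1`. Then there is a unit `b`
of `ℤ[t^{±1}]` such that every `ĥ(ρᵢ)` agrees with the identity except for the block
`[[0, b], [b⁻¹, 0]]` in rows and columns `i, i+1`. -/
theorem statement9 (n : ℕ) (hn : 3 ≤ n)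
    (h : PresentedGroup (vtRels n) →*
      Matrix.GeneralLinearGroup (Fin n) (LaurentPolynomial ℤ))
    (hs : ∀ i : Fin (n - 1),
      (h (PresentedGroup.of (Sum.inl i)) :
        Matrix (Fin n) (Fin n) (LaurentPolynomial ℤ)) = Smat n i.val)
    (hloc : ∀ i : Fin (n - 1), ∀ j k : Fin n,
      ((j.val ≠ i.val ∧ j.val ≠ i.val + 1) ∨ (k.val ≠ i.val ∧ k.val ≠ i.val + 1)) →
      (h (PresentedGroup.of (Sum.inr i)) :
          Matrix (Fin n) (Fin n) (LaurentPolynomial ℤ)) j k =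
        (1 : Matrix (Fin n) (Fin n) (LaurentPolynomial ℤ)) j k) :
    ∃ b : (LaurentPolynomial ℤ)ˣ, ∀ i : Fin (n - 1),
      (h (PresentedGroup.of (Sum.inr i)) :
        Matrix (Fin n) (Fin n) (LaurentPolynomial ℤ)) = Rmat n i.val b := by
    classical
  have hvx : ∀ i : Fin (n - 1), i.val < n := fun i => lt_of_lt_of_le i.isLt (Nat.sub_le n 1)
  have hvy : ∀ i : Fin (n - 1), i.val + 1 < n := fun i => by have := i.isLt; omega
  have hAloc : ∀ i : Fin (n - 1), IsLoc (h (PresentedGroup.of (Sum.inr i)) : Matrix (Fin n) (Fin n) (LaurentPolynomial ℤ)) i.val := by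
    intro i p l hpl
    exact (hloc i p l hpl).trans (Matrix.one_apply)
  have hsqM : ∀ i : Fin (n - 1), (h (PresentedGroup.of (Sum.inr i)) : Matrix (Fin n) (Fin n) (LaurentPolynomial ℤ)) * (h (PresentedGroup.of (Sum.inr i)) : Matrix (Fin n) (Fin n) (LaurentPolynomial ℤ)) = 1 := by
    intro i
    have h1 : h (PresentedGroup.of (Sum.inr i)) * h (PresentedGroup.of (Sum.inr i)) = 1 := by
      rw [← _root_.map_mul, sq_one n i, _root_.map_one]
    calc (h (PresentedGroup.of (Sum.inr i)) : Matrix (Fin n) (Fin n) (LaurentPolynomial ℤ)) * (h (PresentedGroup.of (Sum.inr i)) : Matrix (Fin n) (Fin n) (LaurentPolynomial ℤ))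
        = ((h (PresentedGroup.of (Sum.inr i)) * h (PresentedGroup.of (Sum.inr i)) :
            Matrix.GeneralLinearGroup (Fin n) (LaurentPolynomial ℤ)) :
            Matrix (Fin n) (Fin n) (LaurentPolynomial ℤ)) := (Units.val_mul _ _).symm
      _ = 1 := by rw [h1]; rfl
  have hmixM : ∀ i j : Fin (n - 1), j.val = i.val + 1 →
      (h (PresentedGroup.of (Sum.inr i)) : Matrix (Fin n) (Fin n) (LaurentPolynomial ℤ)) * (h (PresentedGroup.of (Sum.inr j)) : Matrix (Fin n) (Fin n) (LaurentPolynomial ℤ)) * Smat n i.val = Smat n (i.val + 1) * ((h (PresentedGroup.of (Sum.inr i)) : Matrix (Fin n) (Fin n) (LaurentPolynomial ℤ)) * (h (PresentedGroup.of (Sum.inr j)) : Matrix (Fin n) (Fin n) (LaurentPolynomial ℤ))) := by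
    intro i j hj
    have h1 : h (PresentedGroup.of (Sum.inr i)) * h (PresentedGroup.of (Sum.inr j)) *
        h (PresentedGroup.of (Sum.inl i))
        = h (PresentedGroup.of (Sum.inl j)) *
          (h (PresentedGroup.of (Sum.inr i)) * h (PresentedGroup.of (Sum.inr j))) := by
      rw [← mul_assoc]
      simp only [← _root_.map_mul]
      exact congrArg h (mix_rel n i j hj)
    have h2 := congrArg Units.val h1
    simp only [Units.val_mul] at h2
    rw [hs i, hs j, hj] at h2
    exact h2
  have pairL : ∀ i j : Fin (n - 1), j.val = i.val + 1 →
      (h (PresentedGroup.of (Sum.inr i)) : Matrix (Fin n) (Fin n) (LaurentPolynomial ℤ)) ⟨i.val, hvx i⟩ ⟨i.val, hvx i⟩ = 0 ∧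
      (h (PresentedGroup.of (Sum.inr i)) : Matrix (Fin n) (Fin n) (LaurentPolynomial ℤ)) ⟨i.val + 1, hvy i⟩ ⟨i.val + 1, hvy i⟩ = 0 ∧
      (h (PresentedGroup.of (Sum.inr i)) : Matrix (Fin n) (Fin n) (LaurentPolynomial ℤ)) ⟨i.val, hvx i⟩ ⟨i.val + 1, hvy i⟩ *
        (h (PresentedGroup.of (Sum.inr i)) : Matrix (Fin n) (Fin n) (LaurentPolynomial ℤ)) ⟨i.val + 1, hvy i⟩ ⟨i.val, hvx i⟩ = 1 ∧
      (h (PresentedGroup.of (Sum.inr j)) : Matrix (Fin n) (Fin n) (LaurentPolynomial ℤ)) ⟨j.val, hvx j⟩ ⟨j.val, hvx j⟩ = 0 ∧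
      (h (PresentedGroup.of (Sum.inr j)) : Matrix (Fin n) (Fin n) (LaurentPolynomial ℤ)) ⟨j.val + 1, hvy j⟩ ⟨j.val + 1, hvy j⟩ = 0 ∧
      (h (PresentedGroup.of (Sum.inr j)) : Matrix (Fin n) (Fin n) (LaurentPolynomial ℤ)) ⟨j.val, hvx j⟩ ⟨j.val + 1, hvy j⟩ = (h (PresentedGroup.of (Sum.inr i)) : Matrix (Fin n) (Fin n) (LaurentPolynomial ℤ)) ⟨i.val, hvx i⟩ ⟨i.val + 1, hvy i⟩ ∧
      (h (PresentedGroup.of (Sum.inr j)) : Matrix (Fin n) (Fin n) (LaurentPolynomial ℤ)) ⟨j.val + 1, hvy j⟩ ⟨j.val, hvx j⟩ = (h (PresentedGroup.of (Sum.inr i)) : Matrix (Fin n) (Fin n) (LaurentPolynomial ℤ)) ⟨i.val + 1, hvy i⟩ ⟨i.val, hvx i⟩ := by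
    intro i j hj
    have hE : (⟨j.val, hvx j⟩ : Fin n) = ⟨i.val + 1, hvy i⟩ := Fin.ext hj
    rw [hE]
    exact pair_analysis rfl rfl (show j.val + 1 = i.val + 2 by omega) (hAloc i) (hj ▸ hAloc j) (hsqM i) (hsqM j)
      (hmixM i j hj)
  have main : ∀ i : Fin (n - 1),
      (h (PresentedGroup.of (Sum.inr i)) : Matrix (Fin n) (Fin n) (LaurentPolynomial ℤ)) ⟨i.val, hvx i⟩ ⟨i.val, hvx i⟩ = 0 ∧
      (h (PresentedGroup.of (Sum.inr i)) : Matrix (Fin n) (Fin n) (LaurentPolynomial ℤ)) ⟨i.val + 1, hvy i⟩ ⟨i.val + 1, hvy i⟩ = 0 ∧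
      (h (PresentedGroup.of (Sum.inr i)) : Matrix (Fin n) (Fin n) (LaurentPolynomial ℤ)) ⟨i.val, hvx i⟩ ⟨i.val + 1, hvy i⟩ *
        (h (PresentedGroup.of (Sum.inr i)) : Matrix (Fin n) (Fin n) (LaurentPolynomial ℤ)) ⟨i.val + 1, hvy i⟩ ⟨i.val, hvx i⟩ = 1 := by
    intro i
    by_cases hcase : i.val + 1 < n - 1
    · obtain ⟨h1, h2, h3, -⟩ := pairL i ⟨i.val + 1, hcase⟩ rfl
      exact ⟨h1, h2, h3⟩
    · have h1le : 1 ≤ i.val := by have := i.isLt; omega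
      have hlt : i.val - 1 < n - 1 := by have := i.isLt; omega
      obtain ⟨-, -, h3, h4, h5, h6, h7⟩ :=
        pairL ⟨i.val - 1, hlt⟩ i (Nat.succ_pred_eq_of_pos h1le).symm
      refine ⟨h4, h5, ?_⟩
      rw [h6, h7]
      exact h3
  have h0lt : (0 : ℕ) < n - 1 := by omega
  have ballb : ∀ m : ℕ, ∀ hm : m < n - 1,
      (h (PresentedGroup.of (Sum.inr (⟨m, hm⟩ : Fin (n - 1)))) : Matrix (Fin n) (Fin n) (LaurentPolynomial ℤ)) ⟨m, hvx ⟨m, hm⟩⟩ ⟨m + 1, hvy ⟨m, hm⟩⟩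
        = (h (PresentedGroup.of (Sum.inr (⟨0, h0lt⟩ : Fin (n - 1)))) : Matrix (Fin n) (Fin n) (LaurentPolynomial ℤ)) ⟨0, hvx ⟨0, h0lt⟩⟩ ⟨1, hvy ⟨0, h0lt⟩⟩ ∧
      (h (PresentedGroup.of (Sum.inr (⟨m, hm⟩ : Fin (n - 1)))) : Matrix (Fin n) (Fin n) (LaurentPolynomial ℤ)) ⟨m + 1, hvy ⟨m, hm⟩⟩ ⟨m, hvx ⟨m, hm⟩⟩
        = (h (PresentedGroup.of (Sum.inr (⟨0, h0lt⟩ : Fin (n - 1)))) : Matrix (Fin n) (Fin n) (LaurentPolynomial ℤ)) ⟨1, hvy ⟨0, h0lt⟩⟩ ⟨0, hvx ⟨0, h0lt⟩⟩ := by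
    intro m
    induction m with
    | zero => intro hm; exact ⟨rfl, rfl⟩
    | succ k ih =>
      intro hm
      have hk : k < n - 1 := by omega
      obtain ⟨-, -, -, -, -, h6, h7⟩ := pairL ⟨k, hk⟩ ⟨k + 1, hm⟩ rfl
      exact ⟨h6.trans (ih hk).1, h7.trans (ih hk).2⟩
  have hu : (h (PresentedGroup.of (Sum.inr (⟨0, h0lt⟩ : Fin (n - 1)))) : Matrix (Fin n) (Fin n) (LaurentPolynomial ℤ)) ⟨0, hvx ⟨0, h0lt⟩⟩ ⟨1, hvy ⟨0, h0lt⟩⟩ *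
      (h (PresentedGroup.of (Sum.inr (⟨0, h0lt⟩ : Fin (n - 1)))) : Matrix (Fin n) (Fin n) (LaurentPolynomial ℤ)) ⟨1, hvy ⟨0, h0lt⟩⟩ ⟨0, hvx ⟨0, h0lt⟩⟩ = 1 := (main ⟨0, h0lt⟩).2.2
  refine ⟨Units.mkOfMulEqOne _ _ hu, fun i => ?_⟩
  have hbval : (h (PresentedGroup.of (Sum.inr i)) : Matrix (Fin n) (Fin n) (LaurentPolynomial ℤ)) ⟨i.val, hvx i⟩ ⟨i.val + 1, hvy i⟩
      = ((Units.mkOfMulEqOne _ _ hu : (LaurentPolynomial ℤ)ˣ) : LaurentPolynomial ℤ) :=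
    (ballb i.val i.isLt).1
  have hcval : (h (PresentedGroup.of (Sum.inr i)) : Matrix (Fin n) (Fin n) (LaurentPolynomial ℤ)) ⟨i.val + 1, hvy i⟩ ⟨i.val, hvx i⟩
      = (((Units.mkOfMulEqOne _ _ hu : (LaurentPolynomial ℤ)ˣ))⁻¹ : (LaurentPolynomial ℤ)ˣ) :=
    (ballb i.val i.isLt).2
  ext p q
  by_cases hp1 : p.val = i.val
  · by_cases hq1 : q.val = i.val
    · rw [show p = (⟨i.val, hvx i⟩ : Fin n) from Fin.ext hp1,
        show q = (⟨i.val, hvx i⟩ : Fin n) from Fin.ext hq1, (main i).1]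
      simp [Rmat]
    · by_cases hq2 : q.val = i.val + 1
      · rw [show p = (⟨i.val, hvx i⟩ : Fin n) from Fin.ext hp1,
          show q = (⟨i.val + 1, hvy i⟩ : Fin n) from Fin.ext hq2, hbval]
        simp [Rmat]
      · rw [hloc i p q (Or.inr ⟨hq1, hq2⟩), Matrix.one_apply]
        simp [Rmat, hq1, hq2]
  · by_cases hp2 : p.val = i.val + 1
    · by_cases hq1 : q.val = i.val
      · rw [show p = (⟨i.val + 1, hvy i⟩ : Fin n) from Fin.ext hp2,
          show q = (⟨i.val, hvx i⟩ : Fin n) from Fin.ext hq1, hcval]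
        simp [Rmat]
      · by_cases hq2 : q.val = i.val + 1
        · rw [show p = (⟨i.val + 1, hvy i⟩ : Fin n) from Fin.ext hp2,
            show q = (⟨i.val + 1, hvy i⟩ : Fin n) from Fin.ext hq2, (main i).2.1]
          simp [Rmat]
        · rw [hloc i p q (Or.inr ⟨hq1, hq2⟩), Matrix.one_apply]
          simp [Rmat, hq1, hq2]
    · rw [hloc i p q (Or.inl ⟨hp1, hp2⟩), Matrix.one_apply]
      simp [Rmat, hp1, hp2]
end
end

section
/- Let n ≥ 3 and let b be any unit of ℤ[t^{±1}]. Then there exists a group homomorphism ĥ : VT_n → GL_n(ℤ[t^{±1}]) such that for every 1 ≤ i ≤ n−1, ĥ(s_i) = S_i and ĥ(ρ_i) is the n×n matrix agreeing with the identity except in rows and columns i, i+1, where it has the 2×2 block [[0, b],[b^{-1}, 0]]. -/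
noncomputable section
open Matrix

section Aux
variable {R : Type*} [CommRing R]

/-- Matrix agreeing with the identity except for a `w × w` block `A` at position `i`. -/
def blk (n i w : ℕ) (A : Matrix (Fin w) (Fin w) R) : Matrix (Fin n) (Fin n) R :=
  Matrix.of fun j k =>
    if hj : i ≤ j.val ∧ j.val < i + w then
      if hk : i ≤ k.val ∧ k.val < i + w then
        A ⟨j.val - i, by omega⟩ ⟨k.val - i, by omega⟩
      else 0
    else if j = k then (1 : R) else 0

lemma blk_apply_in {n i w : ℕ} (A : Matrix (Fin w) (Fin w) R) {j k : Fin n}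
    (hj : i ≤ j.val ∧ j.val < i + w) (hk : i ≤ k.val ∧ k.val < i + w) :
    blk n i w A j k = A ⟨j.val - i, by omega⟩ ⟨k.val - i, by omega⟩ := by
  simp [blk, hj, hk]

lemma blk_apply_out_left {n i w : ℕ} (A : Matrix (Fin w) (Fin w) R) {j k : Fin n}
    (hj : ¬ (i ≤ j.val ∧ j.val < i + w)) :
    blk n i w A j k = if j = k then 1 else 0 := by
  simp [blk, hj]

lemma blk_apply_out_right {n i w : ℕ} (A : Matrix (Fin w) (Fin w) R) {j k : Fin n}
    (hj : i ≤ j.val ∧ j.val < i + w) (hk : ¬ (i ≤ k.val ∧ k.val < i + w)) :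
    blk n i w A j k = 0 := by
  simp [blk, hj, hk]

lemma blk_one {n i w : ℕ} : blk n i w (1 : Matrix (Fin w) (Fin w) R) = 1 := by
  ext j k
  by_cases hj : i ≤ j.val ∧ j.val < i + w
  · by_cases hk : i ≤ k.val ∧ k.val < i + w
    · rw [blk_apply_in _ hj hk]
      rcases eq_or_ne j k with e | e
      · subst e; simp [Matrix.one_apply]
      · have e2 : (⟨j.val - i, by omega⟩ : Fin w) ≠ ⟨k.val - i, by omega⟩ := by
          intro e2
          have e3 : j.val - i = k.val - i := congrArg Fin.val e2
          exact e (Fin.ext (by omega))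
        rw [Matrix.one_apply_ne e2, Matrix.one_apply_ne e]
    · rw [blk_apply_out_right _ hj hk, Matrix.one_apply,
        if_neg (by rintro rfl; exact hk hj)]
  · rw [blk_apply_out_left _ hj, Matrix.one_apply]

def winEmb (n i w : ℕ) (h : i + w ≤ n) : Fin w ↪ Fin n :=
  ⟨fun p => ⟨i + p.val, by omega⟩, fun a c hac => by
    have h2 : i + a.val = i + c.val := congrArg Fin.val hac
    exact Fin.ext (by omega)⟩

lemma blk_mul {n i w : ℕ} (h : i + w ≤ n) (A B : Matrix (Fin w) (Fin w) R) :
    blk n i w A * blk n i w B = blk n i w (A * B) := by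
  ext j k
  rw [Matrix.mul_apply]
  set e := winEmb n i w h with he0
  have he : ∀ p : Fin w, (e p).val = i + p.val := fun p => rfl
  by_cases hj : i ≤ j.val ∧ j.val < i + w
  · have hsum : ∑ l : Fin n, blk n i w A j l * blk n i w B l k
        = ∑ p : Fin w, blk n i w A j (e p) * blk n i w B (e p) k := by
      rw [← Finset.sum_map Finset.univ e (fun l => blk n i w A j l * blk n i w B l k)]
      refine (Finset.sum_subset (Finset.subset_univ _) ?_).symm
      intro l _ hl
      have hlw : ¬ (i ≤ l.val ∧ l.val < i + w) := by
        intro hc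
        refine hl (Finset.mem_map.mpr ⟨⟨l.val - i, by omega⟩, Finset.mem_univ _, ?_⟩)
        exact Fin.ext (show i + (l.val - i) = l.val by omega)
      rw [blk_apply_out_right _ hj hlw, zero_mul]
    rw [hsum]
    by_cases hk : i ≤ k.val ∧ k.val < i + w
    · rw [blk_apply_in _ hj hk, Matrix.mul_apply]
      refine Finset.sum_congr rfl fun p _ => ?_
      have hw : i ≤ (e p).val ∧ (e p).val < i + w := by rw [he]; omega
      rw [blk_apply_in _ hj hw, blk_apply_in _ (j := e p) hw hk]
      congr 2 <;> exact Fin.ext (show i + p.val - i = p.val by omega)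
    · rw [blk_apply_out_right _ hj hk]
      refine Finset.sum_eq_zero fun p _ => ?_
      have hw : i ≤ (e p).val ∧ (e p).val < i + w := by rw [he]; omega
      rw [blk_apply_out_right _ (j := e p) hw hk, mul_zero]
  · have hterm : ∀ l : Fin n, blk n i w A j l * blk n i w B l k
        = if j = l then blk n i w B l k else 0 := by
      intro l
      rw [blk_apply_out_left _ hj, ite_mul, one_mul, zero_mul]
    simp only [hterm]
    rw [Finset.sum_ite_eq, if_pos (Finset.mem_univ _),
      blk_apply_out_left _ hj, blk_apply_out_left _ hj]

lemma blk_sub_one {n i w : ℕ} (A : Matrix (Fin w) (Fin w) R) {a c : Fin n}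
    (h : ¬ (i ≤ a.val ∧ a.val < i + w) ∨ ¬ (i ≤ c.val ∧ c.val < i + w)) :
    (blk n i w A - 1) a c = 0 := by
  rw [Matrix.sub_apply, Matrix.one_apply]
  rcases h with h | h
  · rw [blk_apply_out_left _ h, sub_self]
  · by_cases ha : i ≤ a.val ∧ a.val < i + w
    · rw [blk_apply_out_right _ ha h, if_neg (by rintro rfl; exact h ha), sub_zero]
    · rw [blk_apply_out_left _ ha, sub_self]

lemma blk_commute {n i w j v : ℕ} (h : i + w ≤ j ∨ j + v ≤ i)
    (A : Matrix (Fin w) (Fin w) R) (B : Matrix (Fin v) (Fin v) R) :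
    blk n i w A * blk n j v B = blk n j v B * blk n i w A := by
  have key : ∀ (a b c d : ℕ) (M : Matrix (Fin b) (Fin b) R) (N : Matrix (Fin d) (Fin d) R),
      (a + b ≤ c ∨ c + d ≤ a) → (blk n a b M - 1) * (blk n c d N - 1) = 0 := by
    intro a b c d M N hac
    ext x y
    rw [Matrix.mul_apply, Matrix.zero_apply]
    refine Finset.sum_eq_zero fun l _ => ?_
    by_cases hl : a ≤ l.val ∧ l.val < a + b
    · have h0 : (blk n c d N - 1) l y = 0 := blk_sub_one _ (Or.inl (by omega))
      rw [h0, mul_zero]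
    · have h0 : (blk n a b M - 1) x l = 0 := blk_sub_one _ (Or.inr hl)
      rw [h0, zero_mul]
  have expand : ∀ (M N : Matrix (Fin n) (Fin n) R), (M - 1) * (N - 1) = 0 →
      M * N = M + N - 1 := by
    intro M N hMN
    calc M * N = (M - 1) * (N - 1) + M + N - 1 := by noncomm_ring
      _ = M + N - 1 := by rw [hMN]; abel
  rw [expand _ _ (key i w j v A B h), expand _ _ (key j v i w B A h.symm), add_comm]

lemma blk_two_apply {n i : ℕ} (A : Matrix (Fin 2) (Fin 2) R) (j k : Fin n) :
    blk n i 2 A j k =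
      if j.val = i ∧ k.val = i then A 0 0
      else if j.val = i ∧ k.val = i + 1 then A 0 1
      else if j.val = i + 1 ∧ k.val = i then A 1 0
      else if j.val = i + 1 ∧ k.val = i + 1 then A 1 1
      else if j = k then 1 else 0 := by
  by_cases hj : i ≤ j.val ∧ j.val < i + 2
  · by_cases hk : i ≤ k.val ∧ k.val < i + 2
    · rw [blk_apply_in _ hj hk]
      have hj' : j.val = i ∨ j.val = i + 1 := by omega
      have hk' : k.val = i ∨ k.val = i + 1 := by omega
      rcases hj' with hj' | hj' <;> rcases hk' with hk' | hk'
      · rw [if_pos ⟨hj', hk'⟩]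
        congr 1
        · exact Fin.ext (show j.val - i = 0 by omega)
        · exact Fin.ext (show k.val - i = 0 by omega)
      · rw [if_neg (show ¬ (j.val = i ∧ k.val = i) by omega), if_pos ⟨hj', hk'⟩]
        congr 1
        · exact Fin.ext (show j.val - i = 0 by omega)
        · exact Fin.ext (show k.val - i = 1 by omega)
      · rw [if_neg (show ¬ (j.val = i ∧ k.val = i) by omega),
          if_neg (show ¬ (j.val = i ∧ k.val = i + 1) by omega), if_pos ⟨hj', hk'⟩]
        congr 1
        · exact Fin.ext (show j.val - i = 1 by omega)
        · exact Fin.ext (show k.val - i = 0 by omega)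
      · rw [if_neg (show ¬ (j.val = i ∧ k.val = i) by omega),
          if_neg (show ¬ (j.val = i ∧ k.val = i + 1) by omega),
          if_neg (show ¬ (j.val = i + 1 ∧ k.val = i) by omega), if_pos ⟨hj', hk'⟩]
        congr 1
        · exact Fin.ext (show j.val - i = 1 by omega)
        · exact Fin.ext (show k.val - i = 1 by omega)
    · rw [blk_apply_out_right _ hj hk,
        if_neg (show ¬ (j.val = i ∧ k.val = i) by omega),
        if_neg (show ¬ (j.val = i ∧ k.val = i + 1) by omega),
        if_neg (show ¬ (j.val = i + 1 ∧ k.val = i) by omega),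
        if_neg (show ¬ (j.val = i + 1 ∧ k.val = i + 1) by omega),
        if_neg (show ¬ (j = k) by rintro rfl; exact hk hj)]
  · rw [blk_apply_out_left _ hj,
      if_neg (show ¬ (j.val = i ∧ k.val = i) by omega),
      if_neg (show ¬ (j.val = i ∧ k.val = i + 1) by omega),
      if_neg (show ¬ (j.val = i + 1 ∧ k.val = i) by omega),
      if_neg (show ¬ (j.val = i + 1 ∧ k.val = i + 1) by omega)]

/-- Embed a `2×2` matrix in the top-left corner of a `3×3` matrix. -/
def ext3l (A : Matrix (Fin 2) (Fin 2) R) : Matrix (Fin 3) (Fin 3) R :=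
  Matrix.of fun p q =>
    if h : p.val < 2 ∧ q.val < 2 then A ⟨p.val, h.1⟩ ⟨q.val, h.2⟩
    else if p = q then 1 else 0

/-- Embed a `2×2` matrix in the bottom-right corner of a `3×3` matrix. -/
def ext3r (A : Matrix (Fin 2) (Fin 2) R) : Matrix (Fin 3) (Fin 3) R :=
  Matrix.of fun p q =>
    if h : 1 ≤ p.val ∧ 1 ≤ q.val then A ⟨p.val - 1, by omega⟩ ⟨q.val - 1, by omega⟩
    else if p = q then 1 else 0

lemma blk23l {n i : ℕ} (A : Matrix (Fin 2) (Fin 2) R) :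
    blk n i 2 A = blk n i 3 (ext3l A) := by
  ext j k
  by_cases hj3 : i ≤ j.val ∧ j.val < i + 3
  · by_cases hk3 : i ≤ k.val ∧ k.val < i + 3
    · rw [blk_apply_in _ hj3 hk3]
      simp only [ext3l, Matrix.of_apply]
      by_cases hj2 : i ≤ j.val ∧ j.val < i + 2
      · by_cases hk2 : i ≤ k.val ∧ k.val < i + 2
        · rw [blk_apply_in _ hj2 hk2,
            dif_pos (⟨show j.val - i < 2 by omega, show k.val - i < 2 by omega⟩ :
              (⟨j.val - i, by omega⟩ : Fin 3).val < 2 ∧ (⟨k.val - i, by omega⟩ : Fin 3).val < 2)]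
        · rw [blk_apply_out_right _ hj2 hk2,
            dif_neg (show ¬ ((⟨j.val - i, by omega⟩ : Fin 3).val < 2 ∧
              (⟨k.val - i, by omega⟩ : Fin 3).val < 2) by
                rintro ⟨-, h2⟩
                have h2' : k.val - i < 2 := h2
                exact hk2 ⟨hk3.1, by omega⟩),
            if_neg (fun e => by
              have h3 : j.val - i = k.val - i := congrArg Fin.val e
              exact hk2 ⟨hk3.1, by omega⟩)]
      · have hj2' : j.val = i + 2 := by omega
        rw [blk_apply_out_left _ hj2,
          dif_neg (show ¬ ((⟨j.val - i, by omega⟩ : Fin 3).val < 2 ∧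
              (⟨k.val - i, by omega⟩ : Fin 3).val < 2) by
            rintro ⟨h1, -⟩
            have h1' : j.val - i < 2 := h1
            omega)]
        rcases eq_or_ne j k with e | e
        · subst e; rw [if_pos rfl, if_pos rfl]
        · rw [if_neg e, if_neg (fun e2 => by
            have h3 : j.val - i = k.val - i := congrArg Fin.val e2
            exact e (Fin.ext (by omega)))]
    · rw [blk_apply_out_right _ hj3 hk3]
      by_cases hj2 : i ≤ j.val ∧ j.val < i + 2
      · rw [blk_apply_out_right _ hj2 (fun hc => hk3 ⟨hc.1, by omega⟩)]
      · rw [blk_apply_out_left _ hj2, if_neg (by rintro rfl; exact hk3 hj3)]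
  · have hj2 : ¬ (i ≤ j.val ∧ j.val < i + 2) := fun hc => hj3 ⟨hc.1, by omega⟩
    rw [blk_apply_out_left _ hj2, blk_apply_out_left _ hj3]

lemma blk23r {n i : ℕ} (A : Matrix (Fin 2) (Fin 2) R) :
    blk n (i + 1) 2 A = blk n i 3 (ext3r A) := by
  ext j k
  by_cases hj3 : i ≤ j.val ∧ j.val < i + 3
  · by_cases hk3 : i ≤ k.val ∧ k.val < i + 3
    · rw [blk_apply_in _ hj3 hk3]
      simp only [ext3r, Matrix.of_apply]
      by_cases hj2 : i + 1 ≤ j.val ∧ j.val < i + 1 + 2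
      · by_cases hk2 : i + 1 ≤ k.val ∧ k.val < i + 1 + 2
        · rw [blk_apply_in _ hj2 hk2,
            dif_pos (⟨show 1 ≤ j.val - i by omega, show 1 ≤ k.val - i by omega⟩ :
              1 ≤ (⟨j.val - i, by omega⟩ : Fin 3).val ∧ 1 ≤ (⟨k.val - i, by omega⟩ : Fin 3).val)]
          congr 1
        · rw [blk_apply_out_right _ hj2 hk2,
            dif_neg (show ¬ (1 ≤ (⟨j.val - i, by omega⟩ : Fin 3).val ∧
              1 ≤ (⟨k.val - i, by omega⟩ : Fin 3).val) by
                rintro ⟨-, h2⟩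
                have h2' : 1 ≤ k.val - i := h2
                exact hk2 ⟨by omega, by omega⟩),
            if_neg (fun e => by
              have h3 : j.val - i = k.val - i := congrArg Fin.val e
              exact hk2 ⟨by omega, by omega⟩)]
      · have hj2' : j.val = i := by omega
        rw [blk_apply_out_left _ hj2,
          dif_neg (show ¬ (1 ≤ (⟨j.val - i, by omega⟩ : Fin 3).val ∧
              1 ≤ (⟨k.val - i, by omega⟩ : Fin 3).val) by
            rintro ⟨h1, -⟩
            have h1' : 1 ≤ j.val - i := h1
            omega)]
        rcases eq_or_ne j k with e | e
        · subst e; rw [if_pos rfl, if_pos rfl]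
        · rw [if_neg e, if_neg (fun e2 => by
            have h3 : j.val - i = k.val - i := congrArg Fin.val e2
            exact e (Fin.ext (by omega)))]
    · rw [blk_apply_out_right _ hj3 hk3]
      by_cases hj2 : i + 1 ≤ j.val ∧ j.val < i + 1 + 2
      · rw [blk_apply_out_right _ hj2 (fun hc => hk3 ⟨by omega, by omega⟩)]
      · rw [blk_apply_out_left _ hj2, if_neg (by rintro rfl; exact hk3 hj3)]
  · have hj2 : ¬ (i + 1 ≤ j.val ∧ j.val < i + 1 + 2) := fun hc => hj3 ⟨by omega, by omega⟩
    rw [blk_apply_out_left _ hj2, blk_apply_out_left _ hj3]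

end Aux

def S2 : Matrix (Fin 2) (Fin 2) (LaurentPolynomial ℤ) :=
  !![1 - LaurentPolynomial.T 1, LaurentPolynomial.T 1;
     2 - LaurentPolynomial.T 1, LaurentPolynomial.T 1 - 1]

def R2 (u : (LaurentPolynomial ℤ)ˣ) : Matrix (Fin 2) (Fin 2) (LaurentPolynomial ℤ) :=
  !![0, (u : LaurentPolynomial ℤ); ((u⁻¹ : (LaurentPolynomial ℤ)ˣ) : LaurentPolynomial ℤ), 0]

lemma Smat_eq (n i : ℕ) : Smat n i = blk n i 2 S2 := by
  ext j k
  rw [blk_two_apply]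
  simp [Smat, S2]

lemma Rmat_eq (n i : ℕ) (u : (LaurentPolynomial ℤ)ˣ) : Rmat n i u = blk n i 2 (R2 u) := by
  ext j k
  rw [blk_two_apply]
  simp [Rmat, R2]

lemma S2_sq : S2 * S2 = 1 := by
  refine Matrix.ext fun p q => ?_
  fin_cases p <;> fin_cases q <;>
    simp [S2, Matrix.mul_apply, Fin.sum_univ_two, Matrix.one_apply] <;> ring

lemma R2_sq (u : (LaurentPolynomial ℤ)ˣ) : R2 u * R2 u = 1 := by
  refine Matrix.ext fun p q => ?_
  fin_cases p <;> fin_cases q <;>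
    simp [R2, Matrix.mul_apply, Fin.sum_univ_two, Matrix.one_apply]

lemma R3_braid (u : (LaurentPolynomial ℤ)ˣ) :
    ext3l (R2 u) * ext3r (R2 u) * ext3l (R2 u)
      = ext3r (R2 u) * ext3l (R2 u) * ext3r (R2 u) := by
  refine Matrix.ext fun p q => ?_
  fin_cases p <;> fin_cases q <;>
    simp [ext3l, ext3r, R2, Matrix.mul_apply, Fin.sum_univ_three]

lemma mixed_braid (u : (LaurentPolynomial ℤ)ˣ) :
    ext3l (R2 u) * ext3r (R2 u) * ext3l S2
      = ext3r S2 * ext3l (R2 u) * ext3r (R2 u) := by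
  refine Matrix.ext fun p q => ?_
  fin_cases p <;> fin_cases q <;>
    simp [ext3l, ext3r, R2, S2, Matrix.mul_apply, Fin.sum_univ_three] <;> ring

/-- For `n ≥ 3` and any unit `b` of `ℤ[t^{±1}]`, there is a group
homomorphism `ĥ : VTₙ → GLₙ(ℤ[t^{±1}])` with `ĥ(sᵢ) = Sᵢ` and with `ĥ(ρᵢ)` the matrix
agreeing with the identity except for the block `[[0, b], [b⁻¹, 0]]` in rows and
columns `i, i+1`, for every `i`. -/
theorem statement10 (n : ℕ) (hn : 3 ≤ n) (b : (LaurentPolynomial ℤ)ˣ) :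
    ∃ h : PresentedGroup (vtRels n) →*
        Matrix.GeneralLinearGroup (Fin n) (LaurentPolynomial ℤ),
      ∀ i : Fin (n - 1),
        (h (PresentedGroup.of (Sum.inl i)) :
          Matrix (Fin n) (Fin n) (LaurentPolynomial ℤ)) = Smat n i.val ∧
        (h (PresentedGroup.of (Sum.inr i)) :
          Matrix (Fin n) (Fin n) (LaurentPolynomial ℤ)) = Rmat n i.val b := by
  have hle : ∀ i : Fin (n - 1), i.val + 2 ≤ n := fun i => by have := i.isLt; omega
  have hSsq : ∀ i : Fin (n - 1), Smat n i.val * Smat n i.val = 1 := fun i => by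
    rw [Smat_eq, blk_mul (hle i), S2_sq, blk_one]
  have hRsq : ∀ i : Fin (n - 1), Rmat n i.val b * Rmat n i.val b = 1 := fun i => by
    rw [Rmat_eq, blk_mul (hle i), R2_sq, blk_one]
  set sU : Fin (n - 1) → Matrix.GeneralLinearGroup (Fin n) (LaurentPolynomial ℤ) :=
    fun i => ⟨Smat n i.val, Smat n i.val, hSsq i, hSsq i⟩ with hsU
  set rU : Fin (n - 1) → Matrix.GeneralLinearGroup (Fin n) (LaurentPolynomial ℤ) :=
    fun i => ⟨Rmat n i.val b, Rmat n i.val b, hRsq i, hRsq i⟩ with hrU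
  have hf : ∀ r ∈ vtRels n, FreeGroup.lift (Sum.elim sU rU) r = 1 := by
    intro r hr
    rcases hr with ⟨i, rfl⟩ | ⟨i, j, hij, rfl⟩ | ⟨i, j, hij, rfl⟩ | ⟨i, j, hij, rfl⟩ |
      ⟨i, rfl⟩ | ⟨i, j, hij, rfl⟩ | ⟨i, j, hij, rfl⟩
    · simp only [_root_.map_mul, FreeGroup.lift_apply_of, Sum.elim_inl]
      exact Units.ext (hSsq i)
    · simp only [_root_.map_mul, map_inv, FreeGroup.lift_apply_of, Sum.elim_inl]
      have hc : sU i * sU j = sU j * sU i := Units.ext (by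
        show Smat n i.val * Smat n j.val = Smat n j.val * Smat n i.val
        rw [Smat_eq n i.val, Smat_eq n j.val]
        exact blk_commute (by omega) _ _)
      rw [hc]; group
    · simp only [_root_.map_mul, map_inv, FreeGroup.lift_apply_of, Sum.elim_inr]
      rw [mul_inv_eq_one]
      refine Units.ext ?_
      show Rmat n i.val b * Rmat n j.val b * Rmat n i.val b
          = Rmat n j.val b * Rmat n i.val b * Rmat n j.val b
      have h3 : i.val + 3 ≤ n := by have := j.isLt; omega
      rw [hij, Rmat_eq n i.val b, Rmat_eq n (i.val + 1) b, blk23l (R2 b), blk23r (R2 b),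
        blk_mul h3, blk_mul h3, blk_mul h3, blk_mul h3, R3_braid]
    · simp only [_root_.map_mul, map_inv, FreeGroup.lift_apply_of, Sum.elim_inr]
      have hc : rU i * rU j = rU j * rU i := Units.ext (by
        show Rmat n i.val b * Rmat n j.val b = Rmat n j.val b * Rmat n i.val b
        rw [Rmat_eq n i.val b, Rmat_eq n j.val b]
        exact blk_commute (by omega) _ _)
      rw [hc]; group
    · simp only [_root_.map_mul, FreeGroup.lift_apply_of, Sum.elim_inr]
      exact Units.ext (hRsq i)
    · simp only [_root_.map_mul, map_inv, FreeGroup.lift_apply_of, Sum.elim_inl, Sum.elim_inr]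
      have hc : sU i * rU j = rU j * sU i := Units.ext (by
        show Smat n i.val * Rmat n j.val b = Rmat n j.val b * Smat n i.val
        rw [Smat_eq n i.val, Rmat_eq n j.val b]
        exact blk_commute (by omega) _ _)
      rw [hc]; group
    · simp only [_root_.map_mul, map_inv, FreeGroup.lift_apply_of, Sum.elim_inl, Sum.elim_inr]
      rw [mul_inv_eq_one]
      refine Units.ext ?_
      show Rmat n i.val b * Rmat n j.val b * Smat n i.val
          = Smat n j.val * Rmat n i.val b * Rmat n j.val b
      have h3 : i.val + 3 ≤ n := by have := j.isLt; omega
      rw [hij, Rmat_eq n i.val b, Rmat_eq n (i.val + 1) b, Smat_eq n i.val,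
        Smat_eq n (i.val + 1), blk23l (R2 b), blk23r (R2 b), blk23l S2, blk23r S2,
        blk_mul h3, blk_mul h3, blk_mul h3, blk_mul h3, mixed_braid]
  refine ⟨PresentedGroup.toGroup hf, fun i => ⟨?_, ?_⟩⟩ <;>
    rw [PresentedGroup.toGroup.of] <;> rfl
end
end

section
/- Let n ≥ 3. There is no group homomorphism ĥ : WT_n → GL_n(ℤ[t^{±1}]) such that ĥ(s_i) = S_i for all 1 ≤ i ≤ n−1 and such that ĥ is 2-local, i.e. for each i, ĥ(ρ_i) agrees with the identity matrix except possibly in rows and columns i, i+1. -/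
noncomputable section
open Matrix

/-- The defining relations of the welded twin group `WTₙ`: those of `VTₙ` together with
`ρᵢ s_{i+1} sᵢ = s_{i+1} sᵢ ρ_{i+1}`. -/
def wtRels (n : ℕ) : Set (FreeGroup (Fin (n - 1) ⊕ Fin (n - 1))) :=
  vtRels n ∪
  {r | ∃ i j : Fin (n - 1), j.val = i.val + 1 ∧
        r = FreeGroup.of (Sum.inr i) * FreeGroup.of (Sum.inl j) * FreeGroup.of (Sum.inl i) *
            (FreeGroup.of (Sum.inl j) * FreeGroup.of (Sum.inl i) * FreeGroup.of (Sum.inr j))⁻¹}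

/-- Auxiliary: the distinguished unit `t` is nonzero. -/
lemma aux_T_ne_zero : (LaurentPolynomial.T 1 : LaurentPolynomial ℤ) ≠ 0 :=
  (LaurentPolynomial.isUnit_T 1).ne_zero

lemma aux_T_ne_one : (LaurentPolynomial.T 1 : LaurentPolynomial ℤ) ≠ 1 := by
  intro h
  have : (Polynomial.X : Polynomial ℤ) = 1 := Polynomial.toLaurent_injective (by simpa using h)
  simpa using congrArg Polynomial.natDegree this

lemma aux_T_ne_two : (LaurentPolynomial.T 1 : LaurentPolynomial ℤ) ≠ 2 := by
  intro h
  have : (Polynomial.X : Polynomial ℤ) = 2 :=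
    Polynomial.toLaurent_injective (by simp [h, Polynomial.toLaurent_X]; norm_num [map_ofNat])
  simpa using congrArg Polynomial.natDegree this

lemma aux_Smat_entry (n i : ℕ) (j k : Fin n) (a b : ℕ) (hj : j.val = a) (hk : k.val = b) :
    Smat n i j k =
      if a = i ∧ b = i then 1 - LaurentPolynomial.T 1
      else if a = i ∧ b = i + 1 then LaurentPolynomial.T 1
      else if a = i + 1 ∧ b = i then 2 - LaurentPolynomial.T 1
      else if a = i + 1 ∧ b = i + 1 then LaurentPolynomial.T 1 - 1
      else if a = b then 1 else 0 := by
  have hjk : (j = k) ↔ (a = b) := by rw [← hj, ← hk, Fin.val_eq_val]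
  simp only [Smat, Matrix.of_apply, hj, hk, hjk]

lemma aux_Smat_zero (n i : ℕ) (hi : i ≤ 1) {j k : Fin n}
    (h : (j.val ≤ 2 ∧ 3 ≤ k.val) ∨ (3 ≤ j.val ∧ k.val ≤ 2)) : Smat n i j k = 0 := by
  have hjk : j ≠ k := by
    intro hh; rw [hh] at h; omega
  simp only [Smat, Matrix.of_apply]
  rw [if_neg (by omega), if_neg (by omega), if_neg (by omega), if_neg (by omega), if_neg hjk]

lemma aux_sum3 {M : Type*} [AddCommMonoid M] {n : ℕ} (f : Fin n → M)
    (x y z : Fin n) (hx : x.val = 0) (hy : y.val = 1) (hz : z.val = 2)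
    (hf : ∀ l : Fin n, 3 ≤ l.val → f l = 0) :
    ∑ l, f l = f x + f y + f z := by
  have h : ∑ l ∈ ({x, y, z} : Finset (Fin n)), f l = ∑ l, f l := by
    apply Finset.sum_subset (Finset.subset_univ _)
    intro w _ hw
    simp only [Finset.mem_insert, Finset.mem_singleton, Fin.ext_iff, hx, hy, hz] at hw
    exact hf w (by omega)
  rw [← h]
  rw [Finset.sum_insert (by simp [Fin.ext_iff, hx, hy, hz]),
    Finset.sum_insert (by simp [Fin.ext_iff, hy, hz]),
    Finset.sum_singleton, add_assoc]

/-- For `n ≥ 3` there is no group homomorphism `ĥ : WTₙ → GLₙ(ℤ[t^{±1}])`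
with `ĥ(sᵢ) = Sᵢ` for all `i` which is 2-local, i.e. such that each `ĥ(ρᵢ)` agrees with
the identity matrix except possibly in rows and columns `i, i+1`. -/
theorem statement11 (n : ℕ) (hn : 3 ≤ n) :
    ¬∃ h : PresentedGroup (wtRels n) →*
        Matrix.GeneralLinearGroup (Fin n) (LaurentPolynomial ℤ),
      (∀ i : Fin (n - 1),
        (h (PresentedGroup.of (Sum.inl i)) :
          Matrix (Fin n) (Fin n) (LaurentPolynomial ℤ)) = Smat n i.val) ∧
      (∀ i : Fin (n - 1), ∀ j k : Fin n,
        ((j.val ≠ i.val ∧ j.val ≠ i.val + 1) ∨ (k.val ≠ i.val ∧ k.val ≠ i.val + 1)) →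
        (h (PresentedGroup.of (Sum.inr i)) :
            Matrix (Fin n) (Fin n) (LaurentPolynomial ℤ)) j k =
          (1 : Matrix (Fin n) (Fin n) (LaurentPolynomial ℤ)) j k) := by
  
  rintro ⟨h, hS, hloc⟩
  obtain ⟨i0, hi0⟩ : ∃ i : Fin (n - 1), i.val = 0 := ⟨⟨0, by omega⟩, rfl⟩
  obtain ⟨i1, hi1⟩ : ∃ i : Fin (n - 1), i.val = 1 := ⟨⟨1, by omega⟩, rfl⟩
  obtain ⟨j0, hj0⟩ : ∃ j : Fin n, j.val = 0 := ⟨⟨0, by omega⟩, rfl⟩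
  obtain ⟨j1, hj1⟩ : ∃ j : Fin n, j.val = 1 := ⟨⟨1, by omega⟩, rfl⟩
  obtain ⟨j2, hj2⟩ : ∃ j : Fin n, j.val = 2 := ⟨⟨2, by omega⟩, rfl⟩
  have hlocP := hloc i0
  have hlocQ := hloc i1
  set P := (h (PresentedGroup.of (Sum.inr i0)) :
      Matrix (Fin n) (Fin n) (LaurentPolynomial ℤ)) with hPdef
  set Q := (h (PresentedGroup.of (Sum.inr i1)) :
      Matrix (Fin n) (Fin n) (LaurentPolynomial ℤ)) with hQdef
  have hSA : (h (PresentedGroup.of (Sum.inl i0)) :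
      Matrix (Fin n) (Fin n) (LaurentPolynomial ℤ)) = Smat n 0 := by rw [hS i0, hi0]
  have hSB : (h (PresentedGroup.of (Sum.inl i1)) :
      Matrix (Fin n) (Fin n) (LaurentPolynomial ℤ)) = Smat n 1 := by rw [hS i1, hi1]
  have rel1 : ∀ r ∈ wtRels n, (QuotientGroup.mk r : PresentedGroup (wtRels n)) = 1 :=
    fun r hr => (QuotientGroup.eq_one_iff r).mpr (Subgroup.subset_normalClosure hr)
  -- the welded relation
  have hwmem : (FreeGroup.of (Sum.inr i0) * FreeGroup.of (Sum.inl i1) * FreeGroup.of (Sum.inl i0) *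
      (FreeGroup.of (Sum.inl i1) * FreeGroup.of (Sum.inl i0) * FreeGroup.of (Sum.inr i1))⁻¹)
      ∈ wtRels n := by
    apply Set.mem_union_right
    exact ⟨i0, i1, by omega, rfl⟩
  have hw1 : (PresentedGroup.of (Sum.inr i0) * PresentedGroup.of (Sum.inl i1) *
      PresentedGroup.of (Sum.inl i0) : PresentedGroup (wtRels n)) =
      PresentedGroup.of (Sum.inl i1) * PresentedGroup.of (Sum.inl i0) *
      PresentedGroup.of (Sum.inr i1) := by
    have h1 := rel1 _ hwmem
    rw [QuotientGroup.mk_mul, QuotientGroup.mk_mul, QuotientGroup.mk_inv,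
      QuotientGroup.mk_mul, QuotientGroup.mk_mul, mul_inv_eq_one] at h1
    exact h1
  have hW : P * (Smat n 1 * Smat n 0) = Smat n 1 * Smat n 0 * Q := by
    have h2 := congrArg (fun z => ((h z :
      Matrix.GeneralLinearGroup (Fin n) (LaurentPolynomial ℤ)) :
      Matrix (Fin n) (Fin n) (LaurentPolynomial ℤ))) hw1
    simp only [_root_.map_mul, Units.val_mul] at h2
    rw [hSA, hSB, ← hPdef, ← hQdef] at h2
    rw [← mul_assoc]
    exact h2
  -- the mixed relation
  have hmmem : (FreeGroup.of (Sum.inr i0) * FreeGroup.of (Sum.inr i1) * FreeGroup.of (Sum.inl i0) *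
      (FreeGroup.of (Sum.inl i1) * FreeGroup.of (Sum.inr i0) * FreeGroup.of (Sum.inr i1))⁻¹)
      ∈ wtRels n := by
    apply Set.mem_union_left
    exact Or.inr (Or.inr (Or.inr (Or.inr (Or.inr (Or.inr ⟨i0, i1, by omega, rfl⟩)))))
  have hm1 : (PresentedGroup.of (Sum.inr i0) * PresentedGroup.of (Sum.inr i1) *
      PresentedGroup.of (Sum.inl i0) : PresentedGroup (wtRels n)) =
      PresentedGroup.of (Sum.inl i1) * PresentedGroup.of (Sum.inr i0) *
      PresentedGroup.of (Sum.inr i1) := by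
    have h1 := rel1 _ hmmem
    rw [QuotientGroup.mk_mul, QuotientGroup.mk_mul, QuotientGroup.mk_inv,
      QuotientGroup.mk_mul, QuotientGroup.mk_mul, mul_inv_eq_one] at h1
    exact h1
  have hM : P * Q * Smat n 0 = Smat n 1 * (P * Q) := by
    have h2 := congrArg (fun z => ((h z :
      Matrix.GeneralLinearGroup (Fin n) (LaurentPolynomial ℤ)) :
      Matrix (Fin n) (Fin n) (LaurentPolynomial ℤ))) hm1
    simp only [_root_.map_mul, Units.val_mul] at h2
    rw [hSA, hSB, ← hPdef, ← hQdef] at h2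
    rw [← mul_assoc]
    exact h2
  -- locality facts
  have p1 : P j1 j2 = 0 := by
    rw [hlocP j1 j2 (Or.inr ⟨by omega, by omega⟩)]
    exact Matrix.one_apply_ne (by intro hh; rw [hh] at hj1; omega)
  have p2 : ∀ l : Fin n, 3 ≤ l.val → P j1 l = 0 := by
    intro l hl
    rw [hlocP j1 l (Or.inr ⟨by omega, by omega⟩)]
    exact Matrix.one_apply_ne (by intro hh; rw [hh] at hj1; omega)
  have p3 : ∀ l : Fin n, P j2 l = (1 : Matrix (Fin n) (Fin n) (LaurentPolynomial ℤ)) j2 l :=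
    fun l => hlocP j2 l (Or.inl ⟨by omega, by omega⟩)
  have q00 : Q j0 j0 = 1 := by
    rw [hlocQ j0 j0 (Or.inl ⟨by omega, by omega⟩)]
    exact Matrix.one_apply_eq j0
  have q01 : Q j0 j1 = 0 := by
    rw [hlocQ j0 j1 (Or.inl ⟨by omega, by omega⟩)]
    exact Matrix.one_apply_ne (by intro hh; rw [hh] at hj0; omega)
  have q02 : Q j0 j2 = 0 := by
    rw [hlocQ j0 j2 (Or.inl ⟨by omega, by omega⟩)]
    exact Matrix.one_apply_ne (by intro hh; rw [hh] at hj0; omega)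
  have q10 : Q j1 j0 = 0 := by
    rw [hlocQ j1 j0 (Or.inr ⟨by omega, by omega⟩)]
    exact Matrix.one_apply_ne (by intro hh; rw [hh] at hj1; omega)
  have q20 : Q j2 j0 = 0 := by
    rw [hlocQ j2 j0 (Or.inr ⟨by omega, by omega⟩)]
    exact Matrix.one_apply_ne (by intro hh; rw [hh] at hj2; omega)
  have q3 : ∀ l : Fin n, 3 ≤ l.val → ∀ k : Fin n, k.val ≤ 2 → Q l k = 0 := by
    intro l hl k hk
    rw [hlocQ l k (Or.inl ⟨by omega, by omega⟩)]
    exact Matrix.one_apply_ne (by intro hh; rw [hh] at hl; omega)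
  have hrow2 : ∀ (D : Matrix (Fin n) (Fin n) (LaurentPolynomial ℤ)) (k : Fin n),
      (P * D) j2 k = D j2 k := by
    intro D k
    rw [Matrix.mul_apply]
    rw [Finset.sum_congr rfl (fun l _ => by rw [p3 l] :
      ∀ l ∈ Finset.univ, P j2 l * D l k
        = (1 : Matrix (Fin n) (Fin n) (LaurentPolynomial ℤ)) j2 l * D l k),
      ← Matrix.mul_apply, Matrix.one_mul]
  -- entries of Smat n 0 (= A) and Smat n 1 (= B)
  have hA00 : Smat n 0 j0 j0 = 1 - LaurentPolynomial.T 1 := by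
    rw [aux_Smat_entry n 0 j0 j0 0 0 hj0 hj0]; norm_num
  have hA01 : Smat n 0 j0 j1 = LaurentPolynomial.T 1 := by
    rw [aux_Smat_entry n 0 j0 j1 0 1 hj0 hj1]; norm_num
  have hA02 : Smat n 0 j0 j2 = 0 := by
    rw [aux_Smat_entry n 0 j0 j2 0 2 hj0 hj2]; norm_num
  have hA10 : Smat n 0 j1 j0 = 2 - LaurentPolynomial.T 1 := by
    rw [aux_Smat_entry n 0 j1 j0 1 0 hj1 hj0]; norm_num
  have hA11 : Smat n 0 j1 j1 = LaurentPolynomial.T 1 - 1 := by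
    rw [aux_Smat_entry n 0 j1 j1 1 1 hj1 hj1]; norm_num
  have hA12 : Smat n 0 j1 j2 = 0 := by
    rw [aux_Smat_entry n 0 j1 j2 1 2 hj1 hj2]; norm_num
  have hA20 : Smat n 0 j2 j0 = 0 := by
    rw [aux_Smat_entry n 0 j2 j0 2 0 hj2 hj0]; norm_num
  have hA21 : Smat n 0 j2 j1 = 0 := by
    rw [aux_Smat_entry n 0 j2 j1 2 1 hj2 hj1]; norm_num
  have hA22 : Smat n 0 j2 j2 = 1 := by
    rw [aux_Smat_entry n 0 j2 j2 2 2 hj2 hj2]; norm_num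
  have hB00 : Smat n 1 j0 j0 = 1 := by
    rw [aux_Smat_entry n 1 j0 j0 0 0 hj0 hj0]; norm_num
  have hB01 : Smat n 1 j0 j1 = 0 := by
    rw [aux_Smat_entry n 1 j0 j1 0 1 hj0 hj1]; norm_num
  have hB02 : Smat n 1 j0 j2 = 0 := by
    rw [aux_Smat_entry n 1 j0 j2 0 2 hj0 hj2]; norm_num
  have hB10 : Smat n 1 j1 j0 = 0 := by
    rw [aux_Smat_entry n 1 j1 j0 1 0 hj1 hj0]; norm_num
  have hB11 : Smat n 1 j1 j1 = 1 - LaurentPolynomial.T 1 := by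
    rw [aux_Smat_entry n 1 j1 j1 1 1 hj1 hj1]; norm_num
  have hB12 : Smat n 1 j1 j2 = LaurentPolynomial.T 1 := by
    rw [aux_Smat_entry n 1 j1 j2 1 2 hj1 hj2]; norm_num
  have hB20 : Smat n 1 j2 j0 = 0 := by
    rw [aux_Smat_entry n 1 j2 j0 2 0 hj2 hj0]; norm_num
  have hB21 : Smat n 1 j2 j1 = 2 - LaurentPolynomial.T 1 := by
    rw [aux_Smat_entry n 1 j2 j1 2 1 hj2 hj1]; norm_num
  have hB22 : Smat n 1 j2 j2 = LaurentPolynomial.T 1 - 1 := by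
    rw [aux_Smat_entry n 1 j2 j2 2 2 hj2 hj2]; norm_num
  -- entries of D := Smat n 1 * Smat n 0
  have hDvan : ∀ (j : Fin n), j.val ≤ 2 → ∀ (k : Fin n), ∀ l : Fin n, 3 ≤ l.val →
      Smat n 1 j l * Smat n 0 l k = 0 := by
    intro j hj k l hl
    rw [aux_Smat_zero n 1 (by norm_num) (Or.inl ⟨hj, hl⟩), zero_mul]
  have hD01 : (Smat n 1 * Smat n 0) j0 j1 = LaurentPolynomial.T 1 := by
    rw [Matrix.mul_apply,
      aux_sum3 _ j0 j1 j2 hj0 hj1 hj2 (hDvan j0 (by omega) j1),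
      hB00, hA01, hB01, hA11, hB02, hA21]; ring
  have hD02 : (Smat n 1 * Smat n 0) j0 j2 = 0 := by
    rw [Matrix.mul_apply,
      aux_sum3 _ j0 j1 j2 hj0 hj1 hj2 (hDvan j0 (by omega) j2),
      hB00, hA02, hB01, hA12, hB02, hA22]; ring
  have hD11 : (Smat n 1 * Smat n 0) j1 j1
      = (1 - LaurentPolynomial.T 1) * (LaurentPolynomial.T 1 - 1) := by
    rw [Matrix.mul_apply,
      aux_sum3 _ j0 j1 j2 hj0 hj1 hj2 (hDvan j1 (by omega) j1),
      hB10, hA01, hB11, hA11, hB12, hA21]; ring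
  have hD12 : (Smat n 1 * Smat n 0) j1 j2 = LaurentPolynomial.T 1 := by
    rw [Matrix.mul_apply,
      aux_sum3 _ j0 j1 j2 hj0 hj1 hj2 (hDvan j1 (by omega) j2),
      hB10, hA02, hB11, hA12, hB12, hA22]; ring
  have hD21 : (Smat n 1 * Smat n 0) j2 j1
      = (2 - LaurentPolynomial.T 1) * (LaurentPolynomial.T 1 - 1) := by
    rw [Matrix.mul_apply,
      aux_sum3 _ j0 j1 j2 hj0 hj1 hj2 (hDvan j2 (by omega) j1),
      hB20, hA01, hB21, hA11, hB22, hA21]; ring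
  have hD22 : (Smat n 1 * Smat n 0) j2 j2 = LaurentPolynomial.T 1 - 1 := by
    rw [Matrix.mul_apply,
      aux_sum3 _ j0 j1 j2 hj0 hj1 hj2 (hDvan j2 (by omega) j2),
      hB20, hA02, hB21, hA12, hB22, hA22]; ring
  -- welded relation, entries (1,1), (1,2), (2,2)
  have EW11 : P j1 j0 * LaurentPolynomial.T 1
      + P j1 j1 * ((1 - LaurentPolynomial.T 1) * (LaurentPolynomial.T 1 - 1))
      = (1 - LaurentPolynomial.T 1) * (LaurentPolynomial.T 1 - 1) * Q j1 j1
        + LaurentPolynomial.T 1 * Q j2 j1 := by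
    have e0 : (P * (Smat n 1 * Smat n 0)) j1 j1 = ((Smat n 1 * Smat n 0) * Q) j1 j1 := by
      rw [hW, mul_assoc]
    rw [Matrix.mul_apply, Matrix.mul_apply,
      aux_sum3 _ j0 j1 j2 hj0 hj1 hj2 (fun l hl => by rw [p2 l hl, zero_mul]),
      aux_sum3 _ j0 j1 j2 hj0 hj1 hj2
        (fun l hl => by rw [q3 l hl j1 (by omega), mul_zero])] at e0
    rw [hD01, hD11, p1, hD12, q01] at e0
    linear_combination e0
  have EW12 : P j1 j1 * LaurentPolynomial.T 1
      = (1 - LaurentPolynomial.T 1) * (LaurentPolynomial.T 1 - 1) * Q j1 j2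
        + LaurentPolynomial.T 1 * Q j2 j2 := by
    have e0 : (P * (Smat n 1 * Smat n 0)) j1 j2 = ((Smat n 1 * Smat n 0) * Q) j1 j2 := by
      rw [hW, mul_assoc]
    rw [Matrix.mul_apply, Matrix.mul_apply,
      aux_sum3 _ j0 j1 j2 hj0 hj1 hj2 (fun l hl => by rw [p2 l hl, zero_mul]),
      aux_sum3 _ j0 j1 j2 hj0 hj1 hj2
        (fun l hl => by rw [q3 l hl j2 (by omega), mul_zero])] at e0
    rw [hD02, hD11, p1, hD12, q02] at e0
    linear_combination e0
  have EW22 : LaurentPolynomial.T 1 - 1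
      = (2 - LaurentPolynomial.T 1) * (LaurentPolynomial.T 1 - 1) * Q j1 j2
        + (LaurentPolynomial.T 1 - 1) * Q j2 j2 := by
    have e0 : (P * (Smat n 1 * Smat n 0)) j2 j2 = ((Smat n 1 * Smat n 0) * Q) j2 j2 := by
      rw [hW, mul_assoc]
    rw [hrow2, hD22, Matrix.mul_apply,
      aux_sum3 _ j0 j1 j2 hj0 hj1 hj2
        (fun l hl => by rw [q3 l hl j2 (by omega), mul_zero]),
      q02, hD21, hD22] at e0
    linear_combination e0
  -- entries of F := P * Q
  have hF10 : (P * Q) j1 j0 = P j1 j0 := by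
    rw [Matrix.mul_apply,
      aux_sum3 _ j0 j1 j2 hj0 hj1 hj2 (fun l hl => by rw [p2 l hl, zero_mul]),
      q00, q10, p1]; ring
  have hF11 : (P * Q) j1 j1 = P j1 j1 * Q j1 j1 := by
    rw [Matrix.mul_apply,
      aux_sum3 _ j0 j1 j2 hj0 hj1 hj2 (fun l hl => by rw [p2 l hl, zero_mul]),
      q01, p1]; ring
  have hF12 : (P * Q) j1 j2 = P j1 j1 * Q j1 j2 := by
    rw [Matrix.mul_apply,
      aux_sum3 _ j0 j1 j2 hj0 hj1 hj2 (fun l hl => by rw [p2 l hl, zero_mul]),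
      q02, p1]; ring
  -- mixed relation, entries (1,0), (1,1), (1,2)
  have EM : ∀ k : Fin n, k.val ≤ 2 →
      P j1 j0 * Smat n 0 j0 k + P j1 j1 * Q j1 j1 * Smat n 0 j1 k
        + P j1 j1 * Q j1 j2 * Smat n 0 j2 k
      = (1 - LaurentPolynomial.T 1) * ((P * Q) j1 k)
        + LaurentPolynomial.T 1 * Q j2 k := by
    intro k hk
    have e0 : (P * Q * Smat n 0) j1 k = (Smat n 1 * (P * Q)) j1 k := by rw [hM]
    rw [Matrix.mul_apply, Matrix.mul_apply,
      aux_sum3 _ j0 j1 j2 hj0 hj1 hj2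
        (fun l hl => by rw [aux_Smat_zero n 0 (by norm_num) (Or.inr ⟨hl, hk⟩), mul_zero]),
      aux_sum3 _ j0 j1 j2 hj0 hj1 hj2
        (fun l hl => by rw [aux_Smat_zero n 1 (by norm_num) (Or.inl ⟨by omega, hl⟩), zero_mul]),
      hF10, hF11, hF12, hB10, hB11, hB12, hrow2 Q k] at e0
    linear_combination e0
  have EM10 := EM j0 (by omega)
  have EM11 := EM j1 (by omega)
  have EM12 := EM j2 (by omega)
  rw [hA00, hA10, hA20, hF10, q20] at EM10
  rw [hA01, hA11, hA21, hF11] at EM11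
  rw [hA02, hA12, hA22, hF12] at EM12
  -- the final algebraic contradiction
  set T : LaurentPolynomial ℤ := LaurentPolynomial.T 1 with hTdef
  have hT0 : T ≠ 0 := (LaurentPolynomial.isUnit_T 1).ne_zero
  have hT1 : T - 1 ≠ 0 := sub_ne_zero.mpr aux_T_ne_one
  have h1T : (1 : LaurentPolynomial ℤ) - T ≠ 0 := sub_ne_zero.mpr (Ne.symm aux_T_ne_one)
  have h2T : (2 : LaurentPolynomial ℤ) - T ≠ 0 := sub_ne_zero.mpr (Ne.symm aux_T_ne_two)
  set c := P j1 j0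
  set d := P j1 j1
  set e := Q j1 j1
  set f := Q j1 j2
  set g := Q j2 j1
  set k2 := Q j2 j2
  have hde : d * e = 0 := by
    have h0 : d * e * (2 - T) = 0 := by linear_combination EM10
    exact (mul_eq_zero.mp h0).resolve_right h2T
  have hcg : c = g := by
    have h0 : (c - g) * T = 0 := by linear_combination EM11 - (2 * T - 2) * hde
    exact sub_eq_zero.mp ((mul_eq_zero.mp h0).resolve_right hT0)
  have hdeq : d = e := by
    have h0 : (d - e) * ((1 - T) * (T - 1)) = 0 := by linear_combination EW11 - T * hcg
    exact sub_eq_zero.mp ((mul_eq_zero.mp h0).resolve_right (mul_ne_zero h1T hT1))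
  have hd0 : d = 0 := by
    rw [← hdeq] at hde
    exact mul_self_eq_zero.mp hde
  have hk2 : k2 = 0 := by
    have h0 : T * k2 = 0 := by linear_combination T * f * hd0 - EM12
    exact (mul_eq_zero.mp h0).resolve_left hT0
  have hf0 : f = 0 := by
    have h0 : (1 - T) * (T - 1) * f = 0 := by linear_combination T * hd0 - T * hk2 - EW12
    exact (mul_eq_zero.mp h0).resolve_left (mul_ne_zero h1T hT1)
  exact hT1 (by linear_combination EW22 + (2 - T) * (T - 1) * hf0 + (T - 1) * hk2)
end
end

section
/- Let n ≥ 2 and let f be any unit of ℤ[t^{±1}]. Then there exists a group homomorphism η₂ : T_n → GL_n(ℤ[t^{±1}]) such that for each 1 ≤ i ≤ n−1, η₂(s_i) = R_i(f), where R_i(f) is the n×n matrix agreeing with the identity except in rows and columns i, i+1, where it has the 2×2 block [[0, f],[f^{-1}, 0]]. -/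
set_option maxHeartbeats 1000000

noncomputable section
open Matrix

lemma Rmat_apply {n i : ℕ} (u : (LaurentPolynomial ℤ)ˣ) (j l : Fin n) :
    Rmat n i u j l =
      if j.val = i then (if l.val = i + 1 then (u : LaurentPolynomial ℤ) else 0)
      else if j.val = i + 1 then
        (if l.val = i then ((u⁻¹ : (LaurentPolynomial ℤ)ˣ) : LaurentPolynomial ℤ) else 0)
      else if j = l then 1 else 0 := by
  simp only [Rmat, Matrix.of_apply, Fin.ext_iff]
  by_cases h1 : j.val = i <;> by_cases h2 : l.val = i <;> by_cases h3 : l.val = i + 1 <;>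
    by_cases h4 : j.val = i + 1 <;> simp_all <;> omega

lemma Rmat_mul_apply {n i : ℕ} (hi : i + 1 < n) (u : (LaurentPolynomial ℤ)ˣ)
    (B : Matrix (Fin n) (Fin n) (LaurentPolynomial ℤ)) (j k : Fin n) :
    (Rmat n i u * B) j k =
      if j.val = i then (u : LaurentPolynomial ℤ) * B ⟨i + 1, hi⟩ k
      else if j.val = i + 1 then
        ((u⁻¹ : (LaurentPolynomial ℤ)ˣ) : LaurentPolynomial ℤ) * B ⟨i, Nat.lt_of_succ_lt hi⟩ k
      else (B j k) := by
  rw [Matrix.mul_apply]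
  by_cases h1 : j.val = i
  · rw [Finset.sum_eq_single (⟨i + 1, hi⟩ : Fin n)]
    · simp [Rmat_apply, h1]
    · intro l _ hl
      have : l.val ≠ i + 1 := fun h => hl (Fin.ext h)
      simp [Rmat_apply, h1, this]
    · simp
  · by_cases h2 : j.val = i + 1
    · rw [Finset.sum_eq_single (⟨i, Nat.lt_of_succ_lt hi⟩ : Fin n)]
      · simp [Rmat_apply, h1, h2]
      · intro l _ hl
        have : l.val ≠ i := fun h => hl (Fin.ext h)
        simp [Rmat_apply, h1, h2, this]
      · simp
    · rw [Finset.sum_eq_single j]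
      · simp [Rmat_apply, h1, h2]
      · intro l _ hl
        have : j ≠ l := fun h => hl h.symm
        simp [Rmat_apply, h1, h2, this]
      · simp

lemma Rmat_mul_self {n i : ℕ} (hi : i + 1 < n) (u : (LaurentPolynomial ℤ)ˣ) :
    Rmat n i u * Rmat n i u = 1 := by
  ext j k
  rw [Rmat_mul_apply hi]
  simp only [Rmat_apply, Matrix.one_apply, Fin.ext_iff]
  split_ifs <;> first | rfl | omega | simp_all

lemma Rmat_comm {n i j : ℕ} (hi : i + 1 < n) (hj : j + 1 < n)
    (hij : i + 2 ≤ j ∨ j + 2 ≤ i) (u : (LaurentPolynomial ℤ)ˣ) :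
    Rmat n i u * Rmat n j u = Rmat n j u * Rmat n i u := by
  have e1 : i ≠ j := by omega
  have e2 : i + 1 ≠ j := by omega
  have e3 : i ≠ j + 1 := by omega
  have e4 : i + 1 ≠ j + 1 := by omega
  have e5 : j ≠ i := by omega
  have e6 : j + 1 ≠ i := by omega
  have e7 : j ≠ i + 1 := by omega
  have e8 : j + 1 ≠ i + 1 := by omega
  ext p k
  rw [Rmat_mul_apply hi, Rmat_mul_apply hj]
  simp only [Rmat_apply, Fin.ext_iff, e1, e2, e3, e4, e5, e6, e7, e8, if_false,
    mul_ite, mul_one, mul_zero]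
  split_ifs <;> first | rfl | omega

/-- For `n ≥ 2` and any unit `f` of `ℤ[t^{±1}]`, there is a group
homomorphism `η₂ : Tₙ → GLₙ(ℤ[t^{±1}])` sending each generator `sᵢ` to the matrix
`Rᵢ(f)` agreeing with the identity except for the block `[[0, f], [f⁻¹, 0]]` in rows
and columns `i, i+1`. -/
theorem statement12 (n : ℕ) (hn : 2 ≤ n) (f : (LaurentPolynomial ℤ)ˣ) :
    ∃ η : PresentedGroup (twinRels n) →*
        Matrix.GeneralLinearGroup (Fin n) (LaurentPolynomial ℤ),
      ∀ i : Fin (n - 1),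
        (η (PresentedGroup.of i) : Matrix (Fin n) (Fin n) (LaurentPolynomial ℤ)) =
          Rmat n i.val f := by
  have key : ∀ i : Fin (n - 1), (i : ℕ) + 1 < n := fun i => by
    have := i.isLt; omega
  let F : Fin (n - 1) → Matrix.GeneralLinearGroup (Fin n) (LaurentPolynomial ℤ) :=
    fun i => ⟨Rmat n i f, Rmat n i f, Rmat_mul_self (key i) f, Rmat_mul_self (key i) f⟩
  have h : ∀ r ∈ twinRels n, FreeGroup.lift F r = 1 := by
    rintro r (⟨i, rfl⟩ | ⟨i, j, hij, rfl⟩)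
    · simp only [_root_.map_mul, FreeGroup.lift_apply_of]
      exact Units.ext (Rmat_mul_self (key i) f)
    · simp only [_root_.map_mul, map_inv, FreeGroup.lift_apply_of]
      have hc : F i * F j = F j * F i :=
        Units.ext (Rmat_comm (key i) (key j) hij f)
      rw [mul_inv_eq_one, mul_inv_eq_iff_eq_mul]
      exact hc
  refine ⟨PresentedGroup.toGroup h, fun i => ?_⟩
  rw [PresentedGroup.toGroup.of]
end
end

section
/- Let f be a unit of ℤ[t^{±1}] and let η₂ : T_n → GL_n(ℤ[t^{±1}]) be the homomorphism with η₂(s_i) = R_i(f) for all i. Then η₂ is injective for n = 2, and for every n ≥ 3 it is not injective; in fact for n ≥ 3 one has η₂((s_1 s_2)³) = 1 while (s_1 s_2)³ ≠ 1 in T_n. -/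
noncomputable section
open Matrix

lemma rmat_eq (n i : ℕ) (hi : i + 1 < n) (u : (LaurentPolynomial ℤ)ˣ) :
    Rmat n i u = 1 + single ⟨i, by omega⟩ ⟨i+1, hi⟩ (u : LaurentPolynomial ℤ)
      + single ⟨i+1, hi⟩ ⟨i, by omega⟩ ((u⁻¹ : (LaurentPolynomial ℤ)ˣ) : LaurentPolynomial ℤ)
      - single ⟨i, by omega⟩ ⟨i, by omega⟩ 1
      - single ⟨i+1, hi⟩ ⟨i+1, hi⟩ 1 := by
  apply Matrix.ext
  intro j k
  simp only [Rmat, Matrix.of_apply, Matrix.add_apply, Matrix.sub_apply, Matrix.one_apply,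
    Matrix.single, Fin.ext_iff, Fin.mk.injEq]
  split_ifs <;> first | (simp; done) | omega

lemma prod_eq (n : ℕ) (hn : 3 ≤ n) (u : (LaurentPolynomial ℤ)ˣ) :
    Rmat n 0 u * Rmat n 1 u =
      1 - single ⟨0, by omega⟩ ⟨0, by omega⟩ 1
        - single ⟨1, by omega⟩ ⟨1, by omega⟩ 1
        - single ⟨2, by omega⟩ ⟨2, by omega⟩ 1
        + single ⟨0, by omega⟩ ⟨2, by omega⟩ ((u : LaurentPolynomial ℤ) * u)
        + single ⟨1, by omega⟩ ⟨0, by omega⟩ ((u⁻¹ : (LaurentPolynomial ℤ)ˣ) : LaurentPolynomial ℤ)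
        + single ⟨2, by omega⟩ ⟨1, by omega⟩ ((u⁻¹ : (LaurentPolynomial ℤ)ˣ) : LaurentPolynomial ℤ) := by
  have h01 : (⟨0, by omega⟩ : Fin n) ≠ ⟨1, by omega⟩ := by simp [Fin.ext_iff]
  have h02 : (⟨0, by omega⟩ : Fin n) ≠ ⟨2, by omega⟩ := by simp [Fin.ext_iff]
  have h12 : (⟨1, by omega⟩ : Fin n) ≠ ⟨2, by omega⟩ := by simp [Fin.ext_iff]
  have h10 := h01.symm
  have h20 := h02.symm
  have h21 := h12.symm
  rw [rmat_eq n 0 (by omega) u, rmat_eq n 1 (by omega) u]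
  simp only [show (1+1:ℕ)=2 from rfl, show (0+1:ℕ)=1 from rfl]
  simp [Matrix.single_mul_single_same, Matrix.single_mul_single_of_ne, mul_add, add_mul,
    mul_sub, sub_mul, Fin.ext_iff]
  abel

lemma cube_eq_one (n : ℕ) (hn : 3 ≤ n) (u : (LaurentPolynomial ℤ)ˣ) :
    (Rmat n 0 u * Rmat n 1 u) ^ 3 = 1 := by
  have hc : ((u⁻¹ : (LaurentPolynomial ℤ)ˣ) : LaurentPolynomial ℤ) * ↑u⁻¹ * (↑u * ↑u) = 1 := by
    rw [← Units.val_mul, ← Units.val_mul, ← Units.val_mul, ← Units.val_one]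
    congr 1
    group
  rw [prod_eq n hn u]
  simp only [pow_succ, pow_zero, one_mul]
  simp [Matrix.single_mul_single_same, Matrix.single_mul_single_of_ne, mul_add, add_mul,
    mul_sub, sub_mul, Fin.ext_iff, Units.mul_inv_cancel_right, Units.inv_mul_cancel_right, hc]
  abel

/-- the permutation `x ↦ -x` of `ℤ` -/
def permA : Equiv.Perm ℤ := ⟨fun x => -x, fun x => -x, fun x => by ring, fun x => by ring⟩
/-- the permutation `x ↦ 1 - x` of `ℤ` -/
def permB : Equiv.Perm ℤ := ⟨fun x => 1 - x, fun x => 1 - x, fun x => by ring, fun x => by ring⟩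

def permG (n : ℕ) (i : Fin (n-1)) : Equiv.Perm ℤ :=
  if i.val = 0 then permA else if i.val = 1 then permB else 1

lemma permG_rels (n : ℕ) : ∀ r ∈ twinRels n, FreeGroup.lift (permG n) r = 1 := by
  rintro r (⟨i, rfl⟩ | ⟨i, j, hij, rfl⟩)
  · simp only [_root_.map_mul, FreeGroup.lift_apply_of]
    ext x
    unfold permG permA permB
    split_ifs <;> simp [Equiv.Perm.mul_apply]
  · have h1 : permG n i = 1 ∨ permG n j = 1 := by
      unfold permG
      split_ifs <;> first | (left; rfl) | (right; rfl) | omega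
    simp only [_root_.map_mul, _root_.map_inv, FreeGroup.lift_apply_of]
    rcases h1 with h | h <;> rw [h] <;> group

lemma pow_ne_one (n : ℕ) (hn : 3 ≤ n) :
    (PresentedGroup.of (⟨0, Nat.sub_pos_of_lt (by omega)⟩ : Fin (n - 1)) *
        PresentedGroup.of (⟨1, Nat.lt_sub_of_add_lt (by omega)⟩ : Fin (n - 1))) ^ 3 ≠
      (1 : PresentedGroup (twinRels n)) := by
  intro h
  have := congrArg (PresentedGroup.toGroup (permG_rels n)) h
  rw [_root_.map_pow, _root_.map_mul, PresentedGroup.toGroup.of, PresentedGroup.toGroup.of, _root_.map_one] at this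
  have h0 : permG n ⟨0, Nat.sub_pos_of_lt (by omega)⟩ = permA := by simp [permG]
  have h1 : permG n ⟨1, Nat.lt_sub_of_add_lt (by omega)⟩ = permB := by simp [permG]
  rw [h0, h1] at this
  have := congrArg (fun e : Equiv.Perm ℤ => e 0) this
  simp only [pow_succ, pow_zero, one_mul, Equiv.Perm.mul_apply, permA, permB,
    Equiv.coe_fn_mk, Equiv.Perm.one_apply] at this
  norm_num at this

lemma t2_elems (x : PresentedGroup (twinRels 2)) :
    x = 1 ∨ x = PresentedGroup.of (0 : Fin 1) := by
  have hg : (PresentedGroup.of (0 : Fin 1) : PresentedGroup (twinRels 2)) *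
      PresentedGroup.of (0 : Fin 1) = 1 := by
    have hr : (FreeGroup.of (0 : Fin 1) * FreeGroup.of 0) ∈ twinRels 2 := Or.inl ⟨0, rfl⟩
    have := (QuotientGroup.eq_one_iff (G := FreeGroup (Fin 1))
      (N := Subgroup.normalClosure (twinRels 2)) _).mpr (Subgroup.subset_normalClosure hr)
    exact this
  obtain ⟨w, rfl⟩ := QuotientGroup.mk'_surjective (Subgroup.normalClosure (twinRels 2)) x
  induction w using FreeGroup.induction_on with
  | C1 => left; simp; rfl
  | of i =>
      right
      have : i = 0 := Fin.ext (by omega)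
      subst this
      rfl
  | inv_of i ih =>
      rcases ih with h | h
      · left; rw [_root_.map_inv, h]; exact inv_one
      · right; rw [_root_.map_inv, h]
        exact inv_eq_of_mul_eq_one_left hg
  | mul a b ha hb =>
      rw [_root_.map_mul]
      rcases ha with h | h <;> rcases hb with h' | h' <;> rw [h, h']
      · exact Or.inl (mul_one _)
      · exact Or.inr (one_mul _)
      · exact Or.inr (mul_one _)
      · exact Or.inl hg

/-- For a unit `f` of `ℤ[t^{±1}]`, the homomorphism
`η₂ : Tₙ → GLₙ(ℤ[t^{±1}])` with `η₂(sᵢ) = Rᵢ(f)` is injective for `n = 2`, and for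
every `n ≥ 3` it is not injective: indeed `η₂((s₁s₂)³) = 1` while `(s₁s₂)³ ≠ 1`
in `Tₙ` (0-indexed, `s₁s₂` is `s₀s₁`). -/
theorem statement13 (f : (LaurentPolynomial ℤ)ˣ) :
    (∀ η : PresentedGroup (twinRels 2) →*
        Matrix.GeneralLinearGroup (Fin 2) (LaurentPolynomial ℤ),
      (∀ i : Fin (2 - 1),
        (η (PresentedGroup.of i) : Matrix (Fin 2) (Fin 2) (LaurentPolynomial ℤ)) =
          Rmat 2 i.val f) →
      Function.Injective η) ∧
    (∀ n : ℕ, ∀ hn : 3 ≤ n,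
      ∀ η : PresentedGroup (twinRels n) →*
          Matrix.GeneralLinearGroup (Fin n) (LaurentPolynomial ℤ),
        (∀ i : Fin (n - 1),
          (η (PresentedGroup.of i) : Matrix (Fin n) (Fin n) (LaurentPolynomial ℤ)) =
            Rmat n i.val f) →
        ¬Function.Injective η ∧
        η ((PresentedGroup.of (⟨0, by omega⟩ : Fin (n - 1)) *
            PresentedGroup.of (⟨1, by omega⟩ : Fin (n - 1))) ^ 3) = 1 ∧
        (PresentedGroup.of (⟨0, by omega⟩ : Fin (n - 1)) *
            PresentedGroup.of (⟨1, by omega⟩ : Fin (n - 1))) ^ 3 ≠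
          (1 : PresentedGroup (twinRels n))) := by
  constructor
  · intro η hη
    rw [injective_iff_map_eq_one]
    intro x hx
    rcases t2_elems x with h | h
    · exact h
    · exfalso
      subst h
      have h1 : (η (PresentedGroup.of (0 : Fin 1)) :
          Matrix (Fin 2) (Fin 2) (LaurentPolynomial ℤ)) = Rmat 2 0 f := hη 0
      rw [hx] at h1
      have := congrArg (fun M : Matrix (Fin 2) (Fin 2) (LaurentPolynomial ℤ) => M 0 0) h1
      simp [Rmat, Matrix.one_apply] at this
  · intro n hn η hη
    have key : η ((PresentedGroup.of (⟨0, by omega⟩ : Fin (n - 1)) *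
        PresentedGroup.of (⟨1, by omega⟩ : Fin (n - 1))) ^ 3) = 1 := by
      apply Units.ext
      rw [_root_.map_pow, _root_.map_mul]
      push_cast
      rw [hη ⟨0, by omega⟩, hη ⟨1, by omega⟩]
      exact cube_eq_one n hn f
    refine ⟨?_, key, pow_ne_one n hn⟩
    intro hinj
    exact pow_ne_one n hn (hinj (by rw [key, _root_.map_one]))
end
end
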